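/- arXiv:2503.13071 — 6 statements merged into one kernel-verified Lean document; each statement's English description precedes it below -/
import Mathlib

section
/- Let d ≥ 2 and let D ⊂ ℝ^d be nonempty, open, bounded and strictly convex (its boundary contains no nondegenerate line segment). Then the cutoff map Λ : closure(D) × ℝ^d → closure(D) is continuous. -/
open Metric Set Bornology

noncomputable section

/-- `lamT D y z` is the largest `t ∈ [0,1]` such that `y + t • (z - y) ∈ closure D`
(for `y ∈ closure D` the defining set is nonempty, closed and bounded, so the
supremum is a maximum). -/
def lamT {d : ℕ} (D : Set (EuclideanSpace ℝ (Fin d)))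
    (y z : EuclideanSpace ℝ (Fin d)) : ℝ :=
  sSup {t : ℝ | t ∈ Set.Icc (0 : ℝ) 1 ∧ y + t • (z - y) ∈ closure D}

/-- The cutoff map `Λ(y,z) = y + t(y,z)•(z-y)`. -/
def Lam {d : ℕ} (D : Set (EuclideanSpace ℝ (Fin d)))
    (y z : EuclideanSpace ℝ (Fin d)) : EuclideanSpace ℝ (Fin d) :=
  y + lamT D y z • (z - y)

namespace LamAux

variable {d : ℕ} {D : Set (EuclideanSpace ℝ (Fin d))}
  {y z : EuclideanSpace ℝ (Fin d)}

/-- The defining set of `lamT`. -/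
def S (D : Set (EuclideanSpace ℝ (Fin d))) (y z : EuclideanSpace ℝ (Fin d)) : Set ℝ :=
  {t : ℝ | t ∈ Set.Icc (0 : ℝ) 1 ∧ y + t • (z - y) ∈ closure D}

lemma lamT_eq (D : Set (EuclideanSpace ℝ (Fin d))) (y z : EuclideanSpace ℝ (Fin d)) :
    lamT D y z = sSup (S D y z) := rfl

lemma S_bddAbove (D : Set (EuclideanSpace ℝ (Fin d))) (y z : EuclideanSpace ℝ (Fin d)) :
    BddAbove (S D y z) := ⟨1, fun _ ht => ht.1.2⟩

lemma lamT_nonneg (D : Set (EuclideanSpace ℝ (Fin d))) (y z : EuclideanSpace ℝ (Fin d)) :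
    0 ≤ lamT D y z := Real.sSup_nonneg fun _ ht => ht.1.1

lemma lamT_le_one (D : Set (EuclideanSpace ℝ (Fin d))) (y z : EuclideanSpace ℝ (Fin d)) :
    lamT D y z ≤ 1 := Real.sSup_le (fun _ ht => ht.1.2) zero_le_one

lemma zero_mem_S (hy : y ∈ closure D) : (0 : ℝ) ∈ S D y z := by
  refine ⟨⟨le_refl 0, zero_le_one⟩, ?_⟩
  simpa using hy

lemma isClosed_S : IsClosed (S D y z) := by
  have : S D y z = Set.Icc (0 : ℝ) 1 ∩ (fun t : ℝ => y + t • (z - y)) ⁻¹' closure D := rfl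
  rw [this]
  exact isClosed_Icc.inter (isClosed_closure.preimage
    (continuous_const.add (continuous_id.smul continuous_const)))

lemma lamT_mem_S (hy : y ∈ closure D) : lamT D y z ∈ S D y z :=
  isClosed_S.csSup_mem ⟨0, zero_mem_S hy⟩ (S_bddAbove D y z)

lemma le_lamT {t : ℝ} (ht : t ∈ S D y z) : t ≤ lamT D y z :=
  le_csSup (S_bddAbove D y z) ht

/-- Key consequence of strict convexity: points strictly inside the segment from
`y` to `Λ(y,z)` lie in the open set `D`. -/
lemma mem_D_of_lt (hop : IsOpen D) (hconv : Convex ℝ D)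
    (hstrict : ∀ a b : EuclideanSpace ℝ (Fin d), a ≠ b → ¬ segment ℝ a b ⊆ frontier D)
    (hy : y ∈ closure D) (hzy : z ≠ y) {t : ℝ} (ht : t ∈ Set.Ioo 0 (lamT D y z)) :
    y + t • (z - y) ∈ D := by
  set T := lamT D y z with hT
  have hT0 : 0 < T := lt_trans ht.1 ht.2
  set Λ : EuclideanSpace ℝ (Fin d) := y + T • (z - y) with hΛ
  have hΛmem : Λ ∈ closure D := (lamT_mem_S hy).2
  have hyΛ : y ≠ Λ := by
    intro h
    apply hzy
    have : T • (z - y) = 0 := by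
      have := h.symm
      rw [hΛ] at this
      simpa using this.symm
    rcases smul_eq_zero.1 this with h' | h'
    · exact absurd h' (ne_of_gt hT0)
    · exact sub_eq_zero.1 h'
  -- find a point of the segment in D
  have hseg : segment ℝ y Λ ⊆ closure D :=
    (hconv.closure).segment_subset hy hΛmem
  obtain ⟨w, hwseg, hwfr⟩ : ∃ w ∈ segment ℝ y Λ, w ∉ frontier D := by
    by_contra h
    push_neg at h
    exact hstrict y Λ hyΛ h
  have hwD : w ∈ D := by
    have hwcl : w ∈ closure D := hseg hwseg
    have : frontier D = closure D \ D := hop.frontier_eq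
    by_contra hw
    exact hwfr (this ▸ ⟨hwcl, hw⟩)
  -- write w = y + (u*T) • (z - y)
  rw [segment_eq_image'] at hwseg
  obtain ⟨u, hu, hw⟩ := hwseg
  have hwrep : w = y + (u * T) • (z - y) := by
    rw [← hw, hΛ]
    simp [smul_smul, mul_comm]
  have hDint : D = interior D := hop.interior_eq.symm
  set τ : ℝ := t / T with hτ
  have hτ0 : 0 < τ := div_pos ht.1 hT0
  have hτ1 : τ < 1 := (div_lt_one hT0).2 ht.2
  have hteq : t = τ * T := (div_mul_cancel₀ t hT0.ne').symm
  rcases lt_trichotomy τ u with hlt | heq | hgt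
  · -- y + t•(z-y) ∈ openSegment y w, with w ∈ interior D, y ∈ closure D
    have hu0 : 0 < u := lt_trans hτ0 hlt
    have hmem : y + t • (z - y) ∈ openSegment ℝ y w := by
      rw [openSegment_eq_image']
      refine ⟨τ / u, ⟨div_pos hτ0 hu0, (div_lt_one hu0).2 hlt⟩, ?_⟩
      rw [hwrep]
      simp only [add_sub_cancel_left, smul_smul]
      rw [hteq]
      congr 2
      rw [← mul_assoc, div_mul_cancel₀ _ hu0.ne', ← hteq]
    have := hconv.openSegment_closure_interior_subset_interior hy
      (hDint ▸ hwD) hmem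
    exact hDint ▸ this
  · rw [hteq, heq, ← hwrep]; exact hwD
  · -- y + t•(z-y) ∈ openSegment w Λ
    have hu1 : u < 1 := lt_of_lt_of_le (lt_of_lt_of_le hgt (le_of_lt hτ1)) le_rfl
    have hmem : y + t • (z - y) ∈ openSegment ℝ w Λ := by
      rw [openSegment_eq_image']
      refine ⟨(τ - u) / (1 - u), ⟨div_pos (sub_pos.2 hgt) (sub_pos.2 hu1),
        (div_lt_one (sub_pos.2 hu1)).2 (by linarith)⟩, ?_⟩
      rw [hwrep, hΛ]
      have : (y + T • (z - y)) - (y + (u * T) • (z - y)) = ((1 - u) * T) • (z - y) := by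
        rw [add_sub_add_left_eq_sub, ← sub_smul]
        congr 1
        ring
      rw [this]
      simp only [smul_smul]
      rw [hteq, add_assoc, ← add_smul]
      congr 2
      have h1u : (1 : ℝ) - u ≠ 0 := sub_ne_zero.2 (ne_of_lt hu1).symm
      field_simp
      ring
    have := hconv.openSegment_interior_closure_subset_interior
      (hDint ▸ hwD) hΛmem hmem
    exact hDint ▸ this

end LamAux

open LamAux

set_option maxHeartbeats 1000000 in
/-- if `D ⊂ ℝ^d` (`d ≥ 2`) is nonempty, open, bounded and strictly convex
(convex, and its boundary contains no nondegenerate line segment), then the cutoff map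
`Λ : closure D × ℝ^d → closure D` is continuous. -/
theorem stmt_0 (d : ℕ) (hd : 2 ≤ d) (D : Set (EuclideanSpace ℝ (Fin d)))
    (hne : D.Nonempty) (hop : IsOpen D) (hbd : IsBounded D) (hconv : Convex ℝ D)
    (hstrict : ∀ a b : EuclideanSpace ℝ (Fin d), a ≠ b → ¬ segment ℝ a b ⊆ frontier D) :
    ContinuousOn
      (fun p : EuclideanSpace ℝ (Fin d) × EuclideanSpace ℝ (Fin d) => Lam D p.1 p.2)
      ((closure D) ×ˢ (Set.univ : Set (EuclideanSpace ℝ (Fin d)))) := by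
  set W : Set (EuclideanSpace ℝ (Fin d) × EuclideanSpace ℝ (Fin d)) :=
    (closure D) ×ˢ (Set.univ : Set (EuclideanSpace ℝ (Fin d))) with hW
  rintro ⟨y, z⟩ hp
  have hy : y ∈ closure D := hp.1
  -- the within-filter eventually gives membership in W
  have hevW : ∀ᶠ p : EuclideanSpace ℝ (Fin d) × EuclideanSpace ℝ (Fin d) in
      nhdsWithin (y, z) W, p.1 ∈ closure D :=
    eventually_nhdsWithin_of_forall (fun p hpW => hpW.1)
  by_cases hzy : z = y
  · -- Lam D y y = y ; squeeze
    subst hzy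
    have hval : Lam D z z = z := by simp [Lam]
    rw [ContinuousWithinAt, hval]
    rw [tendsto_iff_dist_tendsto_zero]
    apply squeeze_zero (fun p => dist_nonneg)
      (g := fun p => ‖p.1 - z‖ + ‖p.2 - p.1‖)
    · intro p
      have h1 : Lam D p.1 p.2 - z = (p.1 - z) + lamT D p.1 p.2 • (p.2 - p.1) := by
        simp [Lam]; abel
      rw [dist_eq_norm, h1]
      refine le_trans (norm_add_le _ _) ?_
      gcongr
      rw [norm_smul]
      have h2 : ‖lamT D p.1 p.2‖ ≤ 1 := by
        rw [Real.norm_eq_abs, abs_of_nonneg (lamT_nonneg D _ _)]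
        exact lamT_le_one D _ _
      calc ‖lamT D p.1 p.2‖ * ‖p.2 - p.1‖ ≤ 1 * ‖p.2 - p.1‖ := by gcongr
        _ = ‖p.2 - p.1‖ := one_mul _
    · have : Filter.Tendsto (fun p : EuclideanSpace ℝ (Fin d) × EuclideanSpace ℝ (Fin d) =>
          ‖p.1 - z‖ + ‖p.2 - p.1‖) (nhds (z, z)) (nhds 0) := by
        have hc : Continuous (fun p : EuclideanSpace ℝ (Fin d) × EuclideanSpace ℝ (Fin d) =>
            ‖p.1 - z‖ + ‖p.2 - p.1‖) :=
          ((continuous_fst.sub continuous_const).norm).add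
            ((continuous_snd.sub continuous_fst).norm)
        have := hc.tendsto (z, z)
        simpa using this
      exact this.mono_left nhdsWithin_le_nhds
  · -- main case : z ≠ y.  First show lamT is continuous within W at (y,z).
    set T := lamT D y z with hT
    have hTmem := lamT_mem_S (D := D) (y := y) (z := z) hy
    have hTle1 : T ≤ 1 := lamT_le_one D y z
    have hT0 : 0 ≤ T := lamT_nonneg D y z
    have husc : ∀ ε : ℝ, 0 < ε → ∀ᶠ p : EuclideanSpace ℝ (Fin d) × EuclideanSpace ℝ (Fin d)
        in nhdsWithin (y, z) W, lamT D p.1 p.2 < T + ε := by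
      intro ε hε
      by_cases h1 : 1 < T + ε
      · filter_upwards with p
        exact lt_of_le_of_lt (lamT_le_one D _ _) h1
      push_neg at h1
      -- the compact segment piece {y + t•(z-y) : t ∈ [T+ε/2, 1]} avoids closure D
      set K : Set (EuclideanSpace ℝ (Fin d)) :=
        (fun t : ℝ => y + t • (z - y)) '' Set.Icc (T + ε / 2) 1 with hK
      have hKcompact : IsCompact K :=
        (isCompact_Icc).image (continuous_const.add (continuous_id.smul continuous_const))
      have hKdisj : K ⊆ (closure D)ᶜ := by
        rintro x ⟨t, ht, rfl⟩
        intro hxcl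
        have htS : t ∈ S D y z := ⟨⟨le_trans (by linarith) ht.1, ht.2⟩, hxcl⟩
        have := le_lamT htS
        rw [← hT] at this
        linarith [ht.1]
      obtain ⟨r, hr, hthick⟩ := hKcompact.exists_thickening_subset_open
        (isClosed_closure.isOpen_compl) hKdisj
      -- choose p close enough
      have hball : ∀ᶠ p : EuclideanSpace ℝ (Fin d) × EuclideanSpace ℝ (Fin d)
          in nhdsWithin (y, z) W, dist p.1 y < r / 2 ∧ dist p.2 z < r / 2 := by
        apply Filter.Eventually.filter_mono nhdsWithin_le_nhds
        have h1 : ∀ᶠ p : EuclideanSpace ℝ (Fin d) × EuclideanSpace ℝ (Fin d)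
            in nhds (y, z), dist p.1 y < r / 2 := by
          have : Continuous (fun p : EuclideanSpace ℝ (Fin d) × EuclideanSpace ℝ (Fin d)
              => dist p.1 y) := continuous_fst.dist continuous_const
          have := this.tendsto (y, z)
          simp only [dist_self] at this
          exact this (Iio_mem_nhds (by linarith))
        have h2 : ∀ᶠ p : EuclideanSpace ℝ (Fin d) × EuclideanSpace ℝ (Fin d)
            in nhds (y, z), dist p.2 z < r / 2 := by
          have : Continuous (fun p : EuclideanSpace ℝ (Fin d) × EuclideanSpace ℝ (Fin d)
              => dist p.2 z) := continuous_snd.dist continuous_const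
          have := this.tendsto (y, z)
          simp only [dist_self] at this
          exact this (Iio_mem_nhds (by linarith))
        exact h1.and h2
      filter_upwards [hball] with p hpball
      -- every t ≥ T + ε/2 is excluded from S D p.1 p.2
      have hex : ∀ t ∈ S D p.1 p.2, t < T + ε / 2 ∨ t ≤ T + ε / 2 := by
        intro t ht
        right
        by_contra hcon
        push_neg at hcon
        have ht1 : t ≤ 1 := ht.1.2
        have hclose : dist (p.1 + t • (p.2 - p.1)) (y + t • (z - y)) < r := by
          have heq : (p.1 + t • (p.2 - p.1)) - (y + t • (z - y))
              = (1 - t) • (p.1 - y) + t • (p.2 - z) := by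
            simp only [smul_sub, sub_smul, one_smul]
            abel
          rw [dist_eq_norm, heq]
          have ht0 : 0 ≤ t := ht.1.1
          calc ‖(1 - t) • (p.1 - y) + t • (p.2 - z)‖
              ≤ ‖(1 - t) • (p.1 - y)‖ + ‖t • (p.2 - z)‖ := norm_add_le _ _
            _ = |1 - t| * ‖p.1 - y‖ + |t| * ‖p.2 - z‖ := by
                rw [norm_smul, norm_smul, Real.norm_eq_abs, Real.norm_eq_abs]
            _ ≤ 1 * ‖p.1 - y‖ + 1 * ‖p.2 - z‖ := by
                gcongr
                · rw [abs_of_nonneg (by linarith)]; linarith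
                · rw [abs_of_nonneg ht0]; linarith
            _ = dist p.1 y + dist p.2 z := by rw [one_mul, one_mul, dist_eq_norm, dist_eq_norm]
            _ < r := by linarith [hpball.1, hpball.2]
        have hmemK : y + t • (z - y) ∈ K := ⟨t, ⟨le_of_lt hcon, ht1⟩, rfl⟩
        have : p.1 + t • (p.2 - p.1) ∈ Metric.thickening r K :=
          Metric.mem_thickening_iff.2 ⟨_, hmemK, hclose⟩
        exact (hthick this) ht.2
      have : lamT D p.1 p.2 ≤ T + ε / 2 := by
        apply Real.sSup_le
        · intro t ht
          rcases hex t ht with h | h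
          · linarith
          · exact h
        · linarith
      linarith
    have hlsc : ∀ ε : ℝ, 0 < ε → ∀ᶠ p : EuclideanSpace ℝ (Fin d) × EuclideanSpace ℝ (Fin d)
        in nhdsWithin (y, z) W, T - ε < lamT D p.1 p.2 := by
      intro ε hε
      by_cases hT0' : T ≤ 0
      · filter_upwards with p
        have := lamT_nonneg D p.1 p.2
        linarith
      push_neg at hT0'
      -- choose t ∈ (0, T) with t > T - ε
      set t : ℝ := max (T - ε / 2) (T / 2) with htdef
      have ht0 : 0 < t := lt_of_lt_of_le (by linarith) (le_max_right _ _)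
      have htT : t < T := max_lt (by linarith) (by linarith)
      have htgt : T - ε < t := lt_of_lt_of_le (by linarith) (le_max_left _ _)
      have hinD : y + t • (z - y) ∈ D :=
        mem_D_of_lt hop hconv hstrict hy hzy ⟨ht0, htT⟩
      have hcont : Continuous (fun p : EuclideanSpace ℝ (Fin d) × EuclideanSpace ℝ (Fin d)
          => p.1 + t • (p.2 - p.1)) :=
        continuous_fst.add ((continuous_snd.sub continuous_fst).const_smul t)
      have hev : ∀ᶠ p : EuclideanSpace ℝ (Fin d) × EuclideanSpace ℝ (Fin d)
          in nhds (y, z), p.1 + t • (p.2 - p.1) ∈ D := by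
        have := hcont.tendsto (y, z)
        simp only at this
        exact this (hop.mem_nhds hinD)
      filter_upwards [hev.filter_mono nhdsWithin_le_nhds] with p hpev
      have htS : t ∈ S D p.1 p.2 :=
        ⟨⟨le_of_lt ht0, le_trans (le_of_lt htT) hTle1⟩, subset_closure hpev⟩
      exact lt_of_lt_of_le htgt (le_lamT htS)
    have hlamT : Filter.Tendsto (fun p : EuclideanSpace ℝ (Fin d) × EuclideanSpace ℝ (Fin d)
        => lamT D p.1 p.2) (nhdsWithin (y, z) W) (nhds T) := by
      rw [Metric.tendsto_nhds]
      intro ε hε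
      filter_upwards [husc ε hε, hlsc ε hε] with p h1 h2
      rw [Real.dist_eq, abs_sub_lt_iff]
      constructor <;> linarith
    -- now conclude for Lam
    have h1 : Filter.Tendsto (fun p : EuclideanSpace ℝ (Fin d) × EuclideanSpace ℝ (Fin d)
        => p.1) (nhdsWithin (y, z) W) (nhds y) :=
      (continuous_fst.tendsto (y, z)).mono_left nhdsWithin_le_nhds
    have h2 : Filter.Tendsto (fun p : EuclideanSpace ℝ (Fin d) × EuclideanSpace ℝ (Fin d)
        => p.2) (nhdsWithin (y, z) W) (nhds z) :=
      (continuous_snd.tendsto (y, z)).mono_left nhdsWithin_le_nhds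
    have : Filter.Tendsto (fun p : EuclideanSpace ℝ (Fin d) × EuclideanSpace ℝ (Fin d)
        => p.1 + lamT D p.1 p.2 • (p.2 - p.1)) (nhdsWithin (y, z) W)
        (nhds (y + T • (z - y))) :=
      h1.add (hlamT.smul (h2.sub h1))
    exact this
end
end

section
/- Let d ≥ 1 and let Σ ⊂ ℝ^d be a nonempty open convex set. Let y ∈ Σ, let z ∈ ℝ^d ∖ Σ, and let a be a point of the segment [y,z] lying on the boundary ∂Σ. Then |a − z| · dist(y, ∂Σ) ≤ |y − z| · dist(z, ∂Σ); in particular, since dist(y,∂Σ) > 0, |a − z| ≤ |y − z| dist(z, ∂Σ) / dist(y, ∂Σ). -/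
open Metric Set

noncomputable section

/-- Thales-type estimate: let `Σ ⊂ ℝ^d` (`d ≥ 1`) be a nonempty open convex
set, `y ∈ Σ`, `z ∉ Σ`, and let `a` be a point of the segment `[y,z]` lying on `∂Σ`. Then
`|a−z| · dist(y,∂Σ) ≤ |y−z| · dist(z,∂Σ)`; in particular (since `dist(y,∂Σ) > 0`)
`|a−z| ≤ |y−z| dist(z,∂Σ) / dist(y,∂Σ)`. -/
theorem stmt_1 (d : ℕ) (hd : 1 ≤ d) (Sg : Set (EuclideanSpace ℝ (Fin d)))
    (hne : Sg.Nonempty) (hop : IsOpen Sg) (hconv : Convex ℝ Sg)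
    (y z a : EuclideanSpace ℝ (Fin d)) (hy : y ∈ Sg) (hz : z ∉ Sg)
    (haseg : a ∈ segment ℝ y z) (hafr : a ∈ frontier Sg) :
    dist a z * Metric.infDist y (frontier Sg) ≤ dist y z * Metric.infDist z (frontier Sg) ∧
    dist a z ≤ dist y z * Metric.infDist z (frontier Sg) / Metric.infDist y (frontier Sg) := by
  obtain ⟨u, v, hu, hv, huv, ha⟩ := haseg
  set ry := Metric.infDist y (frontier Sg) with hry
  set rz := Metric.infDist z (frontier Sg) with hrz
  have hfr_ne : (frontier Sg).Nonempty := ⟨a, hafr⟩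
  have hfr_cl : IsClosed (frontier Sg) := isClosed_frontier
  -- y is not on the frontier, so ry > 0
  have hynf : y ∉ frontier Sg := by
    intro h
    have := hop.inter_frontier_eq
    exact absurd (Set.mem_inter hy h) (by rw [this]; exact Set.notMem_empty y)
  have hry_pos : 0 < ry := (hfr_cl.notMem_iff_infDist_pos hfr_ne).mp hynf
  have hrz_nonneg : 0 ≤ rz := Metric.infDist_nonneg
  -- the ball of radius ry around y is contained in Sg
  have hball : ball y ry ⊆ Sg := by
    have hdisj : Disjoint (ball y ry) (frontier Sg) := Metric.disjoint_ball_infDist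
    have hcover : ball y ry ⊆ Sg ∪ (closure Sg)ᶜ := by
      intro x hx
      by_cases hxc : x ∈ closure Sg
      · left
        have hxint : x ∈ interior Sg := by
          have : x ∉ frontier Sg := fun hxf => (hdisj.ne_of_mem hx hxf) rfl
          simp only [frontier, Set.mem_diff, not_and, not_not] at this
          rw [hop.interior_eq]
          have := this hxc
          rwa [hop.interior_eq] at this
        rwa [hop.interior_eq] at hxint
      · right; exact hxc
    have hconn : IsPreconnected (ball y ry) := (convex_ball y ry).isPreconnected
    rcases hconn.subset_or_subset hop
        (isClosed_closure.isOpen_compl)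
        (by
          rw [Set.disjoint_left]
          intro x hxs hxc
          exact hxc (subset_closure hxs)) hcover with h | h
    · exact h
    · exfalso
      exact (h (mem_ball_self hry_pos)) (subset_closure hy)
  -- a is not in Sg
  have hans : a ∉ Sg := by
    intro h
    have := hop.inter_frontier_eq
    exact absurd (Set.mem_inter h hafr) (by rw [this]; exact Set.notMem_empty a)
  -- nearest frontier point to z
  obtain ⟨b, hb, hbd⟩ := hfr_cl.exists_infDist_eq_dist hfr_ne z
  -- key inequality : u * ry ≤ rz
  have hkey : u * ry ≤ rz := by
    rcases eq_or_lt_of_le hu with h0 | hupos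
    · rw [← h0]; simpa using hrz_nonneg
    -- the ball of radius u * ry around c := u•y + v•b lies in Sg
    have hcball : ball (u • y + v • b) (u * ry) ⊆ Sg := by
      intro p hp
      have hq : y + u⁻¹ • (p - (u • y + v • b)) ∈ ball y ry := by
        rw [mem_ball, dist_eq_norm]
        have : y + u⁻¹ • (p - (u • y + v • b)) - y = u⁻¹ • (p - (u • y + v • b)) := by
          abel
        rw [this, norm_smul, Real.norm_eq_abs, abs_inv, abs_of_pos hupos]
        rw [mem_ball, dist_eq_norm] at hp
        rw [inv_mul_lt_iff₀ hupos]
        linarith [hp]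
      have hqS : y + u⁻¹ • (p - (u • y + v • b)) ∈ interior Sg := by
        rw [hop.interior_eq]; exact hball hq
      have hbc : b ∈ closure Sg := hb.1
      have := hconv.combo_interior_closure_mem_interior hqS hbc hupos hv huv
      rw [hop.interior_eq] at this
      have hpe : u • (y + u⁻¹ • (p - (u • y + v • b))) + v • b = p := by
        rw [smul_add, smul_smul, mul_inv_cancel₀ (ne_of_gt hupos), one_smul]
        abel
      rwa [hpe] at this
    -- a is not in that ball, hence far from its center
    have hadist : u * ry ≤ dist a (u • y + v • b) := by
      by_contra h
      push_neg at h
      exact hans (hcball (mem_ball.mpr h))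
    -- dist a c = v * dist z b
    have hac : dist a (u • y + v • b) = v * dist z b := by
      rw [dist_eq_norm, dist_eq_norm, ← ha]
      have : u • y + v • z - (u • y + v • b) = v • (z - b) := by
        rw [smul_sub]; abel
      rw [this, norm_smul, Real.norm_eq_abs, abs_of_nonneg hv]
    have hvz : v * dist z b ≤ rz := by
      rw [hrz, hbd]
      nlinarith [dist_nonneg (x := z) (y := b)]
    calc u * ry ≤ dist a (u • y + v • b) := hadist
      _ = v * dist z b := hac
      _ ≤ rz := hvz
  -- dist a z = u * dist y z
  have haz : dist a z = u * dist y z := by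
    rw [dist_eq_norm, dist_eq_norm, ← ha]
    have : u • y + v • z - z = u • (y - z) := by
      have hv1 : v = 1 - u := by linarith
      rw [hv1, smul_sub, sub_smul, one_smul]; abel
    rw [this, norm_smul, Real.norm_eq_abs, abs_of_nonneg hu]
  have hmain : dist a z * ry ≤ dist y z * rz := by
    rw [haz]
    calc u * dist y z * ry = dist y z * (u * ry) := by ring
      _ ≤ dist y z * rz := by
          exact mul_le_mul_of_nonneg_left hkey dist_nonneg
  exact ⟨hmain, (le_div_iff₀ hry_pos).mpr hmain⟩
end
end

section
/- Let d ≥ 2, α ∈ (0,2), let D ⊂ ℝ^d be nonempty, open, bounded and strictly convex, and let φ : closure(D) → ℝ be continuous and twice continuously differentiable on D. Then: (i) for every x ∈ D, the function z ↦ [ φ(Λ(x, x+z)) − φ(x) − (z·∇φ(x)) 1_{|z|<1} ] |z|^{−d−α} is Lebesgue-integrable on ℝ^d; (ii) the function x ↦ 𝓛φ(x) is continuous on D; (iii) for every a ∈ (0,∞), replacing the truncation 1_{|z|<1} by 1_{|z|<a} in the integrand leaves the value of 𝓛φ(x) unchanged for every x ∈ D. -/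
open MeasureTheory Metric Set Bornology
open scoped RealInnerProductSpace

noncomputable section

/-- The fractional operator `𝓛φ(x)` with truncation level `a` in the gradient term:
`𝓛φ(x) = ∫_{ℝ^d} [φ(Λ(x,x+z)) − φ(x) − (z·∇φ(x)) 1_{|z|<a}] |z|^{−d−α} dz`. -/
def Lgen {d : ℕ} (D : Set (EuclideanSpace ℝ (Fin d))) (α a : ℝ)
    (φ : EuclideanSpace ℝ (Fin d) → ℝ) (x : EuclideanSpace ℝ (Fin d)) : ℝ :=
  ∫ z : EuclideanSpace ℝ (Fin d),
    (φ (Lam D x (x + z)) - φ x - (if ‖z‖ < a then ⟪z, gradient φ x⟫ else 0))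
      * ‖z‖ ^ (-(d : ℝ) - α)


section AuxLemmas
open Filter Measure
open scoped Topology

lemma lintegral_norm_polar {d : ℕ} (hd : 1 ≤ d) (F : ℝ → ENNReal) (hF : Measurable F) :
    ∫⁻ x : EuclideanSpace ℝ (Fin d), F ‖x‖ =
      (volume : Measure (EuclideanSpace ℝ (Fin d))).toSphere univ *
        ∫⁻ y in Ioi (0:ℝ), ENNReal.ofReal (y ^ (d - 1)) * F y := by
  set E := EuclideanSpace ℝ (Fin d)
  have hdim : Module.finrank ℝ E = d := finrank_euclideanSpace_fin
  haveI : Nontrivial E := Module.nontrivial_of_finrank_pos (R := ℝ) (by omega : 0 < Module.finrank ℝ E)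
  have h1 : ∫⁻ x : E, F ‖x‖ = ∫⁻ x in ({0}ᶜ : Set E), F ‖x‖ := by
    rw [MeasureTheory.restrict_compl_singleton]
  rw [h1, ← lintegral_subtype_comap (measurableSet_singleton (0:E)).compl (fun x => F ‖x‖)]
  have h2 := (volume : Measure E).measurePreserving_homeomorphUnitSphereProd.lintegral_comp_emb
      (Homeomorph.measurableEmbedding _) (fun p : sphere (0:E) 1 × Ioi (0:ℝ) => F p.2)
  rw [show (fun x : ({0}ᶜ : Set E) => F ‖x.1‖)
      = fun x => (fun p : sphere (0:E) 1 × Ioi (0:ℝ) => F p.2) (homeomorphUnitSphereProd E x)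
      from funext fun x => congrArg F (div_one _).symm, h2]
  rw [MeasureTheory.lintegral_prod (fun b : sphere (0:E) 1 × Ioi (0:ℝ) => F b.2.1) (by fun_prop)]
  simp only [lintegral_const]
  have h4 : ∫⁻ y : Ioi (0:ℝ), F y.1 ∂(volumeIoiPow (Module.finrank ℝ E - 1)) =
      ∫⁻ y in Ioi (0:ℝ), ENNReal.ofReal (y ^ (d - 1)) * F y := by
    rw [Measure.volumeIoiPow, lintegral_withDensity_eq_lintegral_mul _
      (by fun_prop) (show Measurable fun y : Ioi (0:ℝ) => F y.1 by fun_prop)]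
    rw [hdim]
    rw [← lintegral_subtype_comap measurableSet_Ioi (fun y : ℝ => ENNReal.ofReal (y ^ (d-1)) * F y)]
    rfl
  rw [h4, mul_comm]

lemma integrable_radial {d : ℕ} (hd : 1 ≤ d) (g : ℝ → ℝ) (hg : Measurable g)
    (h0 : ∀ y : ℝ, 0 ≤ y → 0 ≤ g y)
    (hfin : ∫⁻ y in Ioi (0:ℝ), ENNReal.ofReal (y ^ (d - 1)) * ENNReal.ofReal (g y) < ⊤) :
    Integrable (fun x : EuclideanSpace ℝ (Fin d) => g ‖x‖) := by
  refine ⟨(hg.comp measurable_norm).aestronglyMeasurable, ?_⟩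
  rw [hasFiniteIntegral_def]
  have : ∀ x : EuclideanSpace ℝ (Fin d), ‖g ‖x‖‖ₑ = ENNReal.ofReal (g ‖x‖) := by
    intro x
    rw [← ofReal_norm, Real.norm_of_nonneg (h0 _ (norm_nonneg x))]
  simp_rw [this]
  rw [lintegral_norm_polar hd (fun y => ENNReal.ofReal (g y)) (by fun_prop)]
  exact ENNReal.mul_lt_top (measure_lt_top _ _) hfin

lemma lintegral_lt_top_of_integrableOn {s : Set ℝ} {f : ℝ → ℝ} (hf : IntegrableOn f s) :
    ∫⁻ y in s, ENNReal.ofReal (f y) < ⊤ := by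
  refine lt_of_le_of_lt ?_ hf.hasFiniteIntegral
  refine lintegral_mono fun y => ?_
  rw [← ofReal_norm]
  exact ENNReal.ofReal_le_ofReal (le_abs_self _)

lemma integrable_bound {d : ℕ} (hd : 1 ≤ d) {α : ℝ} (hα : 0 < α) (hα2 : α < 2)
    {r C₁ C₂ : ℝ} (hr : 0 < r) (hC₁ : 0 ≤ C₁) (hC₂ : 0 ≤ C₂) :
    Integrable (fun x : EuclideanSpace ℝ (Fin d) =>
      if ‖x‖ < r then C₁ * ‖x‖ ^ (2 - (d:ℝ) - α) else C₂ * ‖x‖ ^ (-(d:ℝ) - α)) := by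
  set g : ℝ → ℝ := fun y => if y < r then C₁ * y ^ (2 - (d:ℝ) - α) else C₂ * y ^ (-(d:ℝ) - α)
    with hgdef
  have hgm : Measurable g := by
    apply Measurable.ite (measurableSet_lt measurable_id measurable_const) <;> fun_prop
  refine integrable_radial hd g hgm (fun y hy => ?_) ?_
  · rw [hgdef]; dsimp only
    split_ifs <;> exact mul_nonneg (by assumption) (Real.rpow_nonneg hy _)
  · have hpow : ∀ y : ℝ, 0 < y → ∀ b : ℝ, y ^ (d-1) * y ^ b = y ^ ((d:ℝ) - 1 + b) := by
      intro y hy b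
      rw [← Real.rpow_natCast y (d-1), ← Real.rpow_add hy]
      congr 1
      push_cast [Nat.cast_sub hd]
      ring
    have hsplit : (Ioi (0:ℝ)) = Ioo 0 r ∪ Ici r := (Ioo_union_Ici_eq_Ioi hr).symm
    rw [hsplit, lintegral_union measurableSet_Ici ((Iio_disjoint_Ici le_rfl).mono_left Ioo_subset_Iio_self)]
    apply ENNReal.add_lt_top.2
    constructor
    · -- near zero part
      have h1 : ∀ y ∈ Ioo (0:ℝ) r, ENNReal.ofReal (y ^ (d-1)) * ENNReal.ofReal (g y)
          ≤ ENNReal.ofReal (C₁ * y ^ (1 - α)) := by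
        intro y hy
        rw [← ENNReal.ofReal_mul (pow_nonneg hy.1.le _)]
        apply ENNReal.ofReal_le_ofReal
        rw [hgdef]
        simp only [if_pos hy.2]
        rw [mul_comm C₁, ← mul_assoc, hpow y hy.1]
        have : (d:ℝ) - 1 + (2 - (d:ℝ) - α) = 1 - α := by ring
        rw [this, mul_comm]
      calc ∫⁻ y in Ioo (0:ℝ) r, ENNReal.ofReal (y ^ (d-1)) * ENNReal.ofReal (g y)
          ≤ ∫⁻ y in Ioo (0:ℝ) r, ENNReal.ofReal (C₁ * y ^ (1 - α)) :=
            setLIntegral_mono (by fun_prop) h1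
        _ < ⊤ := by
            apply lintegral_lt_top_of_integrableOn
            apply Integrable.const_mul
            have := intervalIntegral.intervalIntegrable_rpow' (a := 0) (b := r)
              (r := 1 - α) (by linarith)
            rw [intervalIntegrable_iff_integrableOn_Ioc_of_le hr.le] at this
            exact this.mono_set Ioo_subset_Ioc_self
    · -- tail part
      have h1 : ∀ y ∈ Ici r, ENNReal.ofReal (y ^ (d-1)) * ENNReal.ofReal (g y)
          ≤ ENNReal.ofReal (C₂ * y ^ (-1 - α)) := by
        intro y hy
        have hy0 : 0 < y := lt_of_lt_of_le hr hy
        rw [← ENNReal.ofReal_mul (pow_nonneg hy0.le _)]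
        apply ENNReal.ofReal_le_ofReal
        rw [hgdef]
        simp only [if_neg (not_lt.2 (mem_Ici.1 hy))]
        rw [mul_comm C₂, ← mul_assoc, hpow y hy0]
        have : (d:ℝ) - 1 + (-(d:ℝ) - α) = -1 - α := by ring
        rw [this, mul_comm]
      calc ∫⁻ y in Ici r, ENNReal.ofReal (y ^ (d-1)) * ENNReal.ofReal (g y)
          ≤ ∫⁻ y in Ici r, ENNReal.ofReal (C₂ * y ^ (-1 - α)) :=
            setLIntegral_mono (by fun_prop) h1
        _ < ⊤ := by
            apply lintegral_lt_top_of_integrableOn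
            have : IntegrableOn (fun y : ℝ => y ^ (-1 - α)) (Ici r) := by
              rw [integrableOn_Ici_iff_integrableOn_Ioi]
              exact integrableOn_Ioi_rpow_of_lt (by linarith) hr
            exact this.const_mul _

variable {d : ℕ}
local notation "E'" => EuclideanSpace ℝ (Fin d)
variable {D : Set (EuclideanSpace ℝ (Fin d))} {x x₀ z z₀ : EuclideanSpace ℝ (Fin d)}

lemma lamT_add : lamT D x (x + z) = sSup {t : ℝ | t ∈ Icc (0:ℝ) 1 ∧ x + t • z ∈ closure D} := by
  simp only [lamT, add_sub_cancel_left]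

lemma S_eq (x z : EuclideanSpace ℝ (Fin d)) :
    {t : ℝ | t ∈ Icc (0:ℝ) 1 ∧ x + t • z ∈ closure D} =
      Icc (0:ℝ) 1 ∩ ((fun t : ℝ => x + t • z) ⁻¹' closure D) := rfl

lemma S_bddAbove (x z : EuclideanSpace ℝ (Fin d)) :
    BddAbove {t : ℝ | t ∈ Icc (0:ℝ) 1 ∧ x + t • z ∈ closure D} :=
  ⟨1, fun t ht => ht.1.2⟩

lemma S_zero_mem (hx : x ∈ closure D) :
    (0:ℝ) ∈ {t : ℝ | t ∈ Icc (0:ℝ) 1 ∧ x + t • z ∈ closure D} :=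
  ⟨⟨le_rfl, zero_le_one⟩, by simpa using hx⟩

lemma lamT_spec (hx : x ∈ closure D) (z : EuclideanSpace ℝ (Fin d)) :
    lamT D x (x + z) ∈ Icc (0:ℝ) 1 ∧ x + lamT D x (x + z) • z ∈ closure D := by
  rw [lamT_add]
  have hcomp : IsCompact {t : ℝ | t ∈ Icc (0:ℝ) 1 ∧ x + t • z ∈ closure D} := by
    rw [S_eq]
    exact isCompact_Icc.inter_right (isClosed_closure.preimage (by fun_prop))
  exact hcomp.sSup_mem ⟨0, S_zero_mem hx⟩

lemma Lam_mem_closure (hx : x ∈ closure D) (z : EuclideanSpace ℝ (Fin d)) :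
    Lam D x (x + z) ∈ closure D := by
  have := (lamT_spec hx z).2
  simpa [Lam, add_sub_cancel_left] using this

lemma lamT_nonneg (hx : x ∈ closure D) (z : EuclideanSpace ℝ (Fin d)) :
    0 ≤ lamT D x (x + z) := (lamT_spec hx z).1.1

lemma Lam_eq_self (hx : x ∈ closure D) (hxz : x + z ∈ closure D) :
    Lam D x (x + z) = x + z := by
  have h1 : (1:ℝ) ∈ {t : ℝ | t ∈ Icc (0:ℝ) 1 ∧ x + t • z ∈ closure D} :=
    ⟨⟨zero_le_one, le_rfl⟩, by simpa using hxz⟩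
  have hle : lamT D x (x + z) ≤ 1 := by
    rw [lamT_add]; exact Real.sSup_le (fun t ht => ht.1.2) zero_le_one
  have hge : (1:ℝ) ≤ lamT D x (x + z) := by
    rw [lamT_add]; exact le_csSup (S_bddAbove x z) h1
  have : lamT D x (x + z) = 1 := le_antisymm hle hge
  simp [Lam, this, add_sub_cancel_left]

lemma lamT_continuousAt (hop : IsOpen D) (hconv : Convex ℝ D) (hx₀ : x₀ ∈ D)
    (z₀ : EuclideanSpace ℝ (Fin d)) :
    ContinuousAt (fun p : EuclideanSpace ℝ (Fin d) × EuclideanSpace ℝ (Fin d) =>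
      lamT D p.1 (p.1 + p.2)) (x₀, z₀) := by
  have hxcl : x₀ ∈ closure D := subset_closure hx₀
  have hxint : x₀ ∈ interior (closure D) :=
    interior_mono subset_closure (by rwa [hop.interior_eq])
  set L := lamT D x₀ (x₀ + z₀) with hLdef
  have hLspec := lamT_spec hxcl z₀
  have hL0 : 0 ≤ L := hLspec.1.1
  have hL1 : L ≤ 1 := hLspec.1.2
  have hLmem : x₀ + L • z₀ ∈ closure D := hLspec.2
  show Filter.Tendsto (fun p : E' × E' => lamT D p.1 (p.1 + p.2)) (nhds (x₀, z₀)) (nhds L)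
  refine tendsto_order.2 ⟨?_, ?_⟩
  · -- lower semicontinuity
    intro b hb
    rcases lt_or_ge b 0 with hb0 | hb0
    · have hev : ∀ᶠ p : E' × E' in 𝓝 (x₀, z₀), p.1 ∈ D :=
        continuous_fst.continuousAt.eventually_mem (hop.mem_nhds hx₀)
      filter_upwards [hev] with p hp
      calc b < 0 := hb0
        _ ≤ lamT D p.1 (p.1 + p.2) := lamT_nonneg (subset_closure hp) _
    · set t₁ := (b + L) / 2 with ht₁def
      have hbt₁ : b < t₁ := by rw [ht₁def]; linarith
      have ht₁L : t₁ < L := by rw [ht₁def]; linarith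
      have ht₁0 : 0 ≤ t₁ := by rw [ht₁def]; linarith
      have hLpos : 0 < L := lt_of_le_of_lt hb0 hb
      have key : (1 - t₁/L) • x₀ + (t₁/L) • (x₀ + L • z₀) = x₀ + t₁ • z₀ := by
        rw [smul_add, smul_smul, div_mul_cancel₀ _ hLpos.ne']
        module
      have hmem : x₀ + t₁ • z₀ ∈ interior (closure D) := by
        rw [← key]
        refine hconv.closure.combo_interior_closure_mem_interior hxint
          (subset_closure hLmem) ?_ (by positivity) (by ring)
        have : t₁ / L < 1 := (div_lt_one hLpos).2 ht₁L
        linarith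
      have hcont : ContinuousAt (fun p : E' × E' => p.1 + t₁ • p.2) (x₀, z₀) := by fun_prop
      have hev : ∀ᶠ p : E' × E' in 𝓝 (x₀, z₀), p.1 + t₁ • p.2 ∈ interior (closure D) :=
        hcont.eventually_mem (isOpen_interior.mem_nhds hmem)
      filter_upwards [hev] with p hp
      have ht₁mem : t₁ ∈ {t : ℝ | t ∈ Icc (0:ℝ) 1 ∧ p.1 + t • p.2 ∈ closure D} :=
        ⟨⟨ht₁0, le_trans ht₁L.le hL1⟩, interior_subset hp⟩
      calc b < t₁ := hbt₁
        _ ≤ lamT D p.1 (p.1 + p.2) := by rw [lamT_add]; exact le_csSup (S_bddAbove _ _) ht₁mem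
  · -- upper semicontinuity
    intro b hb
    rcases lt_or_ge 1 b with hb1 | hb1
    · filter_upwards with p
      calc lamT D p.1 (p.1 + p.2) ≤ 1 := by
            rw [lamT_add]; exact Real.sSup_le (fun t ht => ht.1.2) zero_le_one
        _ < b := hb1
    · set t₂ := (L + b) / 2 with ht₂def
      have hLt₂ : L < t₂ := by rw [ht₂def]; linarith
      have ht₂b : t₂ < b := by rw [ht₂def]; linarith
      have ht₂0 : 0 ≤ t₂ := by rw [ht₂def]; linarith
      have ht₂1 : t₂ ≤ 1 := by rw [ht₂def]; linarith
      set C := (fun t : ℝ => x₀ + t • z₀) '' Icc t₂ 1 with hCdef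
      have hCcomp : IsCompact C := isCompact_Icc.image (by fun_prop)
      have hdisj : Disjoint C (closure D) := by
        rw [Set.disjoint_left]
        rintro _ ⟨t, ht, rfl⟩ hmem
        have htS : t ∈ {s : ℝ | s ∈ Icc (0:ℝ) 1 ∧ x₀ + s • z₀ ∈ closure D} :=
          ⟨⟨le_trans ht₂0 ht.1, ht.2⟩, hmem⟩
        have : t ≤ L := by
          rw [hLdef, lamT_add]; exact le_csSup (S_bddAbove _ _) htS
        linarith [ht.1]
      obtain ⟨δ, hδ, hthick⟩ := hdisj.exists_thickenings hCcomp isClosed_closure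
      have hthick' : Disjoint (thickening δ C) (closure D) :=
        hthick.mono_right (self_subset_thickening hδ _)
      have hev : ∀ᶠ p : E' × E' in 𝓝 (x₀, z₀), dist p (x₀, z₀) < δ / 2 := by
        filter_upwards [Metric.ball_mem_nhds (x₀, z₀) (half_pos hδ)] with p hp
        exact hp
      filter_upwards [hev] with p hp
      have hkey : ∀ t ∈ {s : ℝ | s ∈ Icc (0:ℝ) 1 ∧ p.1 + s • p.2 ∈ closure D}, t ≤ t₂ := by
        intro t ht
        by_contra hcon
        push_neg at hcon
        have htC : x₀ + t • z₀ ∈ C := ⟨t, ⟨hcon.le, ht.1.2⟩, rfl⟩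
        have hdist : dist (p.1 + t • p.2) (x₀ + t • z₀) < δ := by
          have h1 : dist p.1 x₀ ≤ dist p (x₀, z₀) := by
            rw [Prod.dist_eq]; exact le_max_left _ _
          have h2 : dist p.2 z₀ ≤ dist p (x₀, z₀) := by
            rw [Prod.dist_eq]; exact le_max_right _ _
          have h3 : dist (p.1 + t • p.2) (x₀ + t • z₀) ≤ dist p.1 x₀ + t * dist p.2 z₀ := by
            rw [dist_eq_norm, dist_eq_norm, dist_eq_norm]
            have : (p.1 + t • p.2) - (x₀ + t • z₀) = (p.1 - x₀) + t • (p.2 - z₀) := by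
              rw [smul_sub]; abel
            rw [this]
            calc ‖(p.1 - x₀) + t • (p.2 - z₀)‖ ≤ ‖p.1 - x₀‖ + ‖t • (p.2 - z₀)‖ := norm_add_le _ _
              _ = ‖p.1 - x₀‖ + |t| * ‖p.2 - z₀‖ := by rw [norm_smul, Real.norm_eq_abs]
              _ = ‖p.1 - x₀‖ + t * ‖p.2 - z₀‖ := by
                  rw [abs_of_nonneg (le_trans ht₂0 hcon.le)]
          have ht1 : t ≤ 1 := ht.1.2
          have h4 : t * dist p.2 z₀ ≤ dist p.2 z₀ := by
            apply mul_le_of_le_one_left dist_nonneg ht1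
          calc dist (p.1 + t • p.2) (x₀ + t • z₀) ≤ dist p.1 x₀ + t * dist p.2 z₀ := h3
            _ ≤ dist p (x₀, z₀) + dist p (x₀, z₀) := add_le_add h1 (le_trans h4 h2)
            _ < δ / 2 + δ / 2 := by exact add_lt_add hp hp
            _ = δ := by ring
        have : p.1 + t • p.2 ∈ thickening δ C :=
          mem_thickening_iff.2 ⟨x₀ + t • z₀, htC, hdist⟩
        exact (Set.disjoint_left.1 hthick') this ht.2
      calc lamT D p.1 (p.1 + p.2) ≤ t₂ := by rw [lamT_add]; exact Real.sSup_le hkey ht₂0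
        _ < b := ht₂b

lemma Lam_continuousAt (hop : IsOpen D) (hconv : Convex ℝ D) (hx₀ : x₀ ∈ D)
    (z₀ : EuclideanSpace ℝ (Fin d)) :
    ContinuousAt (fun p : EuclideanSpace ℝ (Fin d) × EuclideanSpace ℝ (Fin d) =>
      Lam D p.1 (p.1 + p.2)) (x₀, z₀) := by
  have h : (fun p : EuclideanSpace ℝ (Fin d) × EuclideanSpace ℝ (Fin d) =>
      Lam D p.1 (p.1 + p.2)) = fun p => p.1 + lamT D p.1 (p.1 + p.2) • p.2 := by
    funext p; simp [Lam, add_sub_cancel_left]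
  rw [h]
  exact continuousAt_fst.add ((lamT_continuousAt hop hconv hx₀ z₀).smul continuousAt_snd)

end AuxLemmas

open Filter
open scoped Topology


/-- for `D ⊂ ℝ^d` nonempty open bounded strictly convex and
`φ ∈ C(closure D) ∩ C²(D)`: (i) the integrand defining `𝓛φ(x)` is Lebesgue-integrable
for every `x ∈ D`; (ii) `x ↦ 𝓛φ(x)` is continuous on `D`; (iii) replacing the
truncation `1_{|z|<1}` by `1_{|z|<a}` (`a > 0`) does not change the value of `𝓛φ(x)`. -/
theorem stmt_3 (d : ℕ) (hd : 2 ≤ d) (α : ℝ) (hα : α ∈ Set.Ioo (0 : ℝ) 2)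
    (D : Set (EuclideanSpace ℝ (Fin d)))
    (hne : D.Nonempty) (hop : IsOpen D) (hbd : IsBounded D) (hconv : Convex ℝ D)
    (hstrict : ∀ a b : EuclideanSpace ℝ (Fin d), a ≠ b → ¬ segment ℝ a b ⊆ frontier D)
    (φ : EuclideanSpace ℝ (Fin d) → ℝ)
    (hφc : ContinuousOn φ (closure D)) (hφ2 : ContDiffOn ℝ 2 φ D) :
    (∀ x ∈ D, Integrable (fun z : EuclideanSpace ℝ (Fin d) =>
        (φ (Lam D x (x + z)) - φ x - (if ‖z‖ < 1 then ⟪z, gradient φ x⟫ else 0))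
          * ‖z‖ ^ (-(d : ℝ) - α))) ∧
    ContinuousOn (Lgen D α 1 φ) D ∧
    (∀ a : ℝ, 0 < a → ∀ x ∈ D, Lgen D α a φ x = Lgen D α 1 φ x) := by
  have hd1 : 1 ≤ d := le_trans one_le_two hd
  have hα0 := hα.1
  have hα2 := hα.2
  have hKne : (closure D).Nonempty := hne.closure
  have hKcomp : IsCompact (closure D) := hbd.isCompact_closure
  obtain ⟨M, hM⟩ := hKcomp.exists_bound_of_continuousOn hφc
  have hM0 : 0 ≤ M := le_trans (norm_nonneg _) (hM _ hKne.some_mem)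
  have hdiff : DifferentiableOn ℝ φ D := hφ2.differentiableOn (by norm_num)
  have hf'cont : ContinuousOn (fderiv ℝ φ) D :=
    hφ2.continuousOn_fderiv_of_isOpen hop (by norm_num)
  have hf'cd : ContDiffOn ℝ 1 (fderiv ℝ φ) D := hφ2.fderiv_of_isOpen hop (by norm_num)
  have hf'diff : DifferentiableOn ℝ (fderiv ℝ φ) D := hf'cd.differentiableOn (by norm_num)
  have hf''cont : ContinuousOn (fderiv ℝ (fderiv ℝ φ)) D :=
    hf'cd.continuousOn_fderiv_of_isOpen hop (by norm_num)
  have hgradcont : ContinuousOn (fun y => gradient φ y) D :=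
    (InnerProductSpace.toDual ℝ _).symm.continuous.comp_continuousOn hf'cont
  have hinner : ∀ (x z : EuclideanSpace ℝ (Fin d)), ⟪z, gradient φ x⟫ = fderiv ℝ φ x z := by
    intro x z
    rw [real_inner_comm]
    exact InnerProductSpace.toDual_symm_apply
  have hgradnorm : ∀ x : EuclideanSpace ℝ (Fin d), ‖gradient φ x‖ = ‖fderiv ℝ φ x‖ := by
    intro x
    exact (InnerProductSpace.toDual ℝ _).symm.norm_map _
  -- measurability
  have hmeas : ∀ x ∈ D, ∀ a : ℝ, AEStronglyMeasurable (fun z : EuclideanSpace ℝ (Fin d) =>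
      (φ (Lam D x (x + z)) - φ x - (if ‖z‖ < a then ⟪z, gradient φ x⟫ else 0))
        * ‖z‖ ^ (-(d : ℝ) - α)) volume := by
    intro x hx a
    have hLamc : Continuous (fun z : EuclideanSpace ℝ (Fin d) => Lam D x (x + z)) := by
      rw [continuous_iff_continuousAt]
      intro z
      exact (Lam_continuousAt hop hconv hx z).comp
        ((continuous_const.prodMk continuous_id).continuousAt)
    have h1 : Continuous (fun z : EuclideanSpace ℝ (Fin d) => φ (Lam D x (x + z))) :=
      hφc.comp_continuous hLamc (fun z => Lam_mem_closure (subset_closure hx) z)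
    apply Measurable.aestronglyMeasurable
    apply Measurable.mul
    · apply Measurable.sub
      · exact (h1.measurable).sub measurable_const
      · exact Measurable.ite (measurableSet_lt measurable_norm measurable_const)
          ((continuous_id.inner continuous_const).measurable) measurable_const
    · fun_prop
  -- KEY domination estimate
  have KEY : ∀ x₀ ∈ D, ∃ r : ℝ, 0 < r ∧ r < 1 ∧ ∃ C₁ C₂ : ℝ, 0 ≤ C₁ ∧ 0 ≤ C₂ ∧
      ∀ x ∈ ball x₀ r, ∀ z : EuclideanSpace ℝ (Fin d),
        ‖(φ (Lam D x (x + z)) - φ x - (if ‖z‖ < 1 then ⟪z, gradient φ x⟫ else 0))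
            * ‖z‖ ^ (-(d : ℝ) - α)‖
          ≤ (if ‖z‖ < r then C₁ * ‖z‖ ^ (2 - (d:ℝ) - α) else C₂ * ‖z‖ ^ (-(d:ℝ) - α)) := by
    intro x₀ hx₀
    obtain ⟨r₀, hr₀, hball⟩ := Metric.nhds_basis_closedBall.mem_iff.1 (hop.mem_nhds hx₀)
    set r := min r₀ 1 / 2 with hrdef
    have hr : 0 < r := by positivity
    have hr1 : r < 1 := by
      rw [hrdef]
      have : min r₀ 1 ≤ 1 := min_le_right _ _
      linarith
    have h2r : closedBall x₀ (2 * r) ⊆ D := by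
      refine subset_trans (closedBall_subset_closedBall ?_) hball
      rw [hrdef]
      have : min r₀ 1 ≤ r₀ := min_le_left _ _
      linarith
    obtain ⟨L₀, hL₀⟩ := (isCompact_closedBall x₀ (2*r)).exists_bound_of_continuousOn
      (f := fderiv ℝ (fderiv ℝ φ)) (hf''cont.mono h2r)
    set L := max L₀ 0 with hLdef
    have hL : 0 ≤ L := le_max_right _ _
    have hL₀' : ∀ y ∈ closedBall x₀ (2*r), ‖fderiv ℝ (fderiv ℝ φ) y‖ ≤ L :=
      fun y hy => le_trans (hL₀ y hy) (le_max_left _ _)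
    obtain ⟨G₀, hG₀⟩ := (isCompact_closedBall x₀ (2*r)).exists_bound_of_continuousOn
      (hf'cont.mono h2r)
    set G := max G₀ 0 with hGdef
    have hG : 0 ≤ G := le_max_right _ _
    have hG' : ∀ y ∈ closedBall x₀ (2*r), ‖fderiv ℝ φ y‖ ≤ G :=
      fun y hy => le_trans (hG₀ y hy) (le_max_left _ _)
    -- Lipschitz bound for fderiv on the ball
    have hLip : ∀ y ∈ closedBall x₀ (2*r), ∀ w ∈ closedBall x₀ (2*r),
        ‖fderiv ℝ φ y - fderiv ℝ φ w‖ ≤ L * ‖y - w‖ := by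
      intro y hy w hw
      exact (convex_closedBall x₀ (2*r)).norm_image_sub_le_of_norm_fderiv_le
        (fun u hu => hf'diff.differentiableAt (hop.mem_nhds (h2r hu))) hL₀' hw hy
    -- Taylor estimate
    have hTaylor : ∀ x ∈ ball x₀ r, ∀ z : EuclideanSpace ℝ (Fin d), ‖z‖ ≤ r →
        ‖φ (x + z) - φ x - fderiv ℝ φ x z‖ ≤ L * ‖z‖ ^ 2 := by
      intro x hx z hz
      have hsub : closedBall x ‖z‖ ⊆ closedBall x₀ (2*r) := by
        intro y hy
        rw [mem_closedBall] at *
        calc dist y x₀ ≤ dist y x + dist x x₀ := dist_triangle _ _ _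
          _ ≤ ‖z‖ + r := add_le_add hy (le_of_lt (mem_ball.1 hx))
          _ ≤ 2 * r := by linarith
      set g : EuclideanSpace ℝ (Fin d) → ℝ := fun y => φ y - fderiv ℝ φ x y with hgdef
      have hgd : ∀ y ∈ closedBall x ‖z‖, DifferentiableAt ℝ g y := by
        intro y hy
        exact (hdiff.differentiableAt (hop.mem_nhds (h2r (hsub hy)))).sub
          ((fderiv ℝ φ x).differentiable.differentiableAt)
      have hgderiv : ∀ y ∈ closedBall x ‖z‖, ‖fderiv ℝ g y‖ ≤ L * ‖z‖ := by
        intro y hy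
        have heq : fderiv ℝ g y = fderiv ℝ φ y - fderiv ℝ φ x := by
          rw [hgdef]
          rw [fderiv_fun_sub (hdiff.differentiableAt (hop.mem_nhds (h2r (hsub hy))))
            ((fderiv ℝ φ x).differentiable.differentiableAt)]
          simp [ContinuousLinearMap.fderiv]
        rw [heq]
        have hxmem : x ∈ closedBall x₀ (2*r) :=
          hsub (mem_closedBall_self (norm_nonneg z))
        calc ‖fderiv ℝ φ y - fderiv ℝ φ x‖ ≤ L * ‖y - x‖ := hLip y (hsub hy) x hxmem
          _ ≤ L * ‖z‖ := by
              apply mul_le_mul_of_nonneg_left _ hL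
              rw [← dist_eq_norm]
              exact mem_closedBall.1 hy
      have hx_mem : x ∈ closedBall x ‖z‖ := mem_closedBall_self (norm_nonneg z)
      have hxz_mem : x + z ∈ closedBall x ‖z‖ := by
        rw [mem_closedBall, dist_eq_norm, add_sub_cancel_left]
      have := (convex_closedBall x ‖z‖).norm_image_sub_le_of_norm_fderiv_le
        hgd hgderiv hx_mem hxz_mem
      have hgval : g (x + z) - g x = φ (x + z) - φ x - fderiv ℝ φ x z := by
        rw [hgdef]
        simp only [map_add]
        ring
      rw [hgval, add_sub_cancel_left] at this
      calc ‖φ (x + z) - φ x - fderiv ℝ φ x z‖ ≤ L * ‖z‖ * ‖z‖ := this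
        _ = L * ‖z‖ ^ 2 := by ring
    refine ⟨r, hr, hr1, L, 2 * M + G, hL, by positivity, ?_⟩
    intro x hx z
    have hxD : x ∈ D := h2r (closedBall_subset_closedBall (by linarith) (ball_subset_closedBall hx))
    have hkpos : (0:ℝ) ≤ ‖z‖ ^ (-(d:ℝ) - α) := Real.rpow_nonneg (norm_nonneg z) _
    rw [norm_mul, Real.norm_of_nonneg hkpos]
    by_cases hz : ‖z‖ < r
    · -- inside: Taylor regime
      rw [if_pos hz]
      have hxzD : x + z ∈ D := by
        apply h2r
        rw [mem_closedBall]
        calc dist (x + z) x₀ ≤ dist (x + z) x + dist x x₀ := dist_triangle _ _ _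
          _ ≤ ‖z‖ + r := by
              rw [dist_eq_norm, add_sub_cancel_left]
              exact add_le_add le_rfl (le_of_lt (mem_ball.1 hx))
          _ ≤ 2 * r := by linarith
      rw [Lam_eq_self (subset_closure hxD) (subset_closure hxzD)]
      rw [if_pos (lt_trans hz hr1), hinner]
      by_cases hz0 : z = 0
      · simp [hz0]
        positivity
      · have hnz : 0 < ‖z‖ := norm_pos_iff.2 hz0
        have hT := hTaylor x hx z hz.le
        have hksplit : ‖z‖ ^ (2 - (d:ℝ) - α) = ‖z‖ ^ 2 * ‖z‖ ^ (-(d:ℝ) - α) := by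
          rw [show (2 - (d:ℝ) - α) = 2 + (-(d:ℝ) - α) by ring, Real.rpow_add hnz]
          congr 1
          rw [show ((2:ℝ)) = ((2:ℕ):ℝ) by norm_num, Real.rpow_natCast]
        rw [hksplit, ← mul_assoc]
        apply mul_le_mul_of_nonneg_right _ hkpos
        calc ‖φ (x + z) - φ x - fderiv ℝ φ x z‖ ≤ L * ‖z‖ ^ 2 := hT
          _ = L * ‖z‖ ^ 2 := rfl
    · -- outside
      rw [if_neg hz]
      apply mul_le_mul_of_nonneg_right _ hkpos
      have hLam : Lam D x (x + z) ∈ closure D := Lam_mem_closure (subset_closure hxD) z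
      have h1 : ‖φ (Lam D x (x + z)) - φ x‖ ≤ 2 * M := by
        calc ‖φ (Lam D x (x + z)) - φ x‖ ≤ ‖φ (Lam D x (x + z))‖ + ‖φ x‖ := norm_sub_le _ _
          _ ≤ M + M := add_le_add (hM _ hLam) (hM _ (subset_closure hxD))
          _ = 2 * M := by ring
      have h2 : ‖(if ‖z‖ < 1 then ⟪z, gradient φ x⟫ else 0)‖ ≤ G := by
        by_cases h1z : ‖z‖ < 1
        · rw [if_pos h1z]
          have hxmem : x ∈ closedBall x₀ (2*r) :=
            closedBall_subset_closedBall (by linarith) (ball_subset_closedBall hx)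
          calc ‖⟪z, gradient φ x⟫‖ ≤ ‖z‖ * ‖gradient φ x‖ := norm_inner_le_norm _ _
            _ ≤ 1 * G := by
                apply mul_le_mul h1z.le _ (norm_nonneg _) zero_le_one
                rw [hgradnorm]
                exact hG' x hxmem
            _ = G := one_mul G
        · rw [if_neg h1z]; simpa using hG
      calc ‖φ (Lam D x (x + z)) - φ x - (if ‖z‖ < 1 then ⟪z, gradient φ x⟫ else 0)‖
          ≤ ‖φ (Lam D x (x + z)) - φ x‖ + ‖(if ‖z‖ < 1 then ⟪z, gradient φ x⟫ else 0)‖ :=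
            norm_sub_le _ _
        _ ≤ 2 * M + G := add_le_add h1 h2
  -- Part (i)
  have hInt : ∀ x ∈ D, Integrable (fun z : EuclideanSpace ℝ (Fin d) =>
      (φ (Lam D x (x + z)) - φ x - (if ‖z‖ < 1 then ⟪z, gradient φ x⟫ else 0))
        * ‖z‖ ^ (-(d : ℝ) - α)) := by
    intro x hx
    obtain ⟨r, hr, hr1, C₁, C₂, hC₁, hC₂, hbd'⟩ := KEY x hx
    exact (integrable_bound hd1 hα0 hα2 hr hC₁ hC₂).mono' (hmeas x hx 1)
      (ae_of_all _ (hbd' x (mem_ball_self hr)))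
  refine ⟨hInt, ?_, ?_⟩
  · -- Part (ii)
    intro x₀ hx₀
    apply ContinuousAt.continuousWithinAt
    obtain ⟨r, hr, hr1, C₁, C₂, hC₁, hC₂, hbd'⟩ := KEY x₀ hx₀
    have hfun : Lgen D α 1 φ = fun x => ∫ z : EuclideanSpace ℝ (Fin d),
        (φ (Lam D x (x + z)) - φ x - (if ‖z‖ < 1 then ⟪z, gradient φ x⟫ else 0))
          * ‖z‖ ^ (-(d : ℝ) - α) := rfl
    rw [hfun]
    apply continuousAt_of_dominated (bound := fun z : EuclideanSpace ℝ (Fin d) =>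
      if ‖z‖ < r then C₁ * ‖z‖ ^ (2 - (d:ℝ) - α) else C₂ * ‖z‖ ^ (-(d:ℝ) - α))
    · filter_upwards [hop.mem_nhds hx₀] with x hx
      exact hmeas x hx 1
    · filter_upwards [ball_mem_nhds x₀ hr] with x hx
      exact ae_of_all _ (hbd' x hx)
    · exact integrable_bound hd1 hα0 hα2 hr hC₁ hC₂
    · apply ae_of_all
      intro z
      have hφΛ : ContinuousAt (fun x => φ (Lam D x (x + z))) x₀ := by
        have hpair : ContinuousAt (fun x : EuclideanSpace ℝ (Fin d) => (x, z)) x₀ :=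
          (continuous_id.prodMk continuous_const).continuousAt
        have hL : ContinuousAt (fun x : EuclideanSpace ℝ (Fin d) => Lam D x (x + z)) x₀ :=
          ContinuousAt.comp (f := fun x : EuclideanSpace ℝ (Fin d) => (x, z)) (x := x₀)
            (Lam_continuousAt hop hconv hx₀ z) hpair
        have hmaps : ∀ᶠ x : EuclideanSpace ℝ (Fin d) in 𝓝 x₀, Lam D x (x + z) ∈ closure D := by
          filter_upwards [hop.mem_nhds hx₀] with x hx
          exact Lam_mem_closure (subset_closure hx) z
        have hφat : ContinuousWithinAt φ (closure D) (Lam D x₀ (x₀ + z)) :=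
          hφc _ (Lam_mem_closure (subset_closure hx₀) z)
        exact hφat.tendsto.comp (tendsto_nhdsWithin_iff.mpr ⟨hL, hmaps⟩)
      have hφx : ContinuousAt φ x₀ :=
        hφc.continuousAt (Filter.mem_of_superset (hop.mem_nhds hx₀) subset_closure)
      have hgrad : ContinuousAt (fun x => gradient φ x) x₀ :=
        hgradcont.continuousAt (hop.mem_nhds hx₀)
      have hind : ContinuousAt (fun x => (if ‖z‖ < 1 then ⟪z, gradient φ x⟫ else 0)) x₀ := by
        by_cases hz1 : ‖z‖ < 1
        · have heq : (fun x : EuclideanSpace ℝ (Fin d) =>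
              (if ‖z‖ < 1 then ⟪z, gradient φ x⟫ else 0)) = fun x => ⟪z, gradient φ x⟫ :=
            funext fun x => if_pos hz1
          rw [heq]
          exact (continuousAt_const.inner hgrad)
        · have heq : (fun x : EuclideanSpace ℝ (Fin d) =>
              (if ‖z‖ < 1 then ⟪z, gradient φ x⟫ else 0)) = fun _ => (0:ℝ) :=
            funext fun x => if_neg hz1
          rw [heq]
          exact continuousAt_const
      exact ((hφΛ.sub hφx).sub hind).mul continuousAt_const
  · -- Part (iii)
    intro a ha x hx
    set v := gradient φ x with hv
    set h : EuclideanSpace ℝ (Fin d) → ℝ := fun z =>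
      ((if ‖z‖ < 1 then ⟪z, v⟫ else 0) - (if ‖z‖ < a then ⟪z, v⟫ else 0))
        * ‖z‖ ^ (-(d : ℝ) - α) with hhdef
    have hmeash : AEStronglyMeasurable h volume := by
      apply Measurable.aestronglyMeasurable
      apply Measurable.mul
      · apply Measurable.sub <;>
          exact Measurable.ite (measurableSet_lt measurable_norm measurable_const)
            ((continuous_id.inner continuous_const).measurable) measurable_const
      · fun_prop
    have hbnd : ∀ z : EuclideanSpace ℝ (Fin d), ‖h z‖ ≤
        (if ‖z‖ < min a 1 then 0 * ‖z‖ ^ (2 - (d:ℝ) - α)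
          else (‖v‖ * max a 1) * ‖z‖ ^ (-(d:ℝ) - α)) := by
      intro z
      have hkpos : (0:ℝ) ≤ ‖z‖ ^ (-(d:ℝ) - α) := Real.rpow_nonneg (norm_nonneg z) _
      rw [hhdef]
      simp only
      rw [norm_mul, Real.norm_of_nonneg hkpos]
      by_cases hmz : ‖z‖ < min a 1
      · rw [if_pos hmz, if_pos (lt_of_lt_of_le hmz (min_le_right _ _)),
          if_pos (lt_of_lt_of_le hmz (min_le_left _ _))]
        simp
      · rw [if_neg hmz]
        apply mul_le_mul_of_nonneg_right _ hkpos
        have hzv : ‖z‖ < max a 1 → ‖⟪z, v⟫‖ ≤ ‖v‖ * max a 1 := by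
          intro hzm
          calc ‖⟪z, v⟫‖ ≤ ‖z‖ * ‖v‖ := norm_inner_le_norm _ _
            _ ≤ max a 1 * ‖v‖ := mul_le_mul_of_nonneg_right hzm.le (norm_nonneg v)
            _ = ‖v‖ * max a 1 := mul_comm _ _
        by_cases h1 : ‖z‖ < 1 <;> by_cases h2 : ‖z‖ < a
        · rw [if_pos h1, if_pos h2, sub_self, norm_zero]; positivity
        · rw [if_pos h1, if_neg h2, sub_zero]
          exact hzv (lt_of_lt_of_le h1 (le_max_right a 1))
        · rw [if_neg h1, if_pos h2, zero_sub, norm_neg]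
          exact hzv (lt_of_lt_of_le h2 (le_max_left a 1))
        · rw [if_neg h1, if_neg h2, sub_self, norm_zero]; positivity
    have hinth : Integrable h := by
      refine (integrable_bound hd1 hα0 hα2 (lt_min ha one_pos) le_rfl (by positivity)).mono'
        hmeash (ae_of_all _ hbnd)
    have hodd : ∀ z, h (-z) = - h z := by
      intro z
      rw [hhdef]
      simp only [norm_neg, inner_neg_left]
      by_cases h1 : ‖z‖ < 1 <;> by_cases h2 : ‖z‖ < a <;>
        simp [h1, h2] <;> ring
    have hzero : ∫ z, h z = 0 := by
      have h1 : ∫ z, h (-z) = ∫ z, h z := integral_neg_eq_self h volume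
      simp_rw [hodd] at h1
      rw [integral_neg] at h1
      linarith
    have hsplit : (fun z : EuclideanSpace ℝ (Fin d) =>
        (φ (Lam D x (x + z)) - φ x - (if ‖z‖ < a then ⟪z, v⟫ else 0)) * ‖z‖ ^ (-(d : ℝ) - α))
        = (fun z => (φ (Lam D x (x + z)) - φ x - (if ‖z‖ < 1 then ⟪z, v⟫ else 0))
            * ‖z‖ ^ (-(d : ℝ) - α) + h z) := by
      funext z
      rw [hhdef]
      simp only
      ring
    show Lgen D α a φ x = Lgen D α 1 φ x
    rw [Lgen, Lgen, ← hv, hsplit, integral_add (hInt x hx) hinth, hzero, add_zero]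
end
end

section
/- Let d ≥ 2, α ∈ (0,1), let D ⊂ ℝ^d be nonempty, open, bounded and strictly convex, let γ ∈ (α, 1] and K > 0, and let φ : closure(D) → ℝ be twice continuously differentiable on D and γ-Hölder on closure(D), i.e. |φ(u) − φ(v)| ≤ K|u−v|^γ for all u, v ∈ closure(D). Then sup_{x ∈ D} |𝓛φ(x)| < ∞. -/
open MeasureTheory Metric Set Bornology
open scoped RealInnerProductSpace

noncomputable section

section Aux

open Real

/-- Integrability of a negative power of the norm near the origin, `-d < s < 0`. -/
lemma aux_ball {d : ℕ} {s : ℝ} (hds : -(d : ℝ) < s) (hs : s < 0) :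
    IntegrableOn (fun z : EuclideanSpace ℝ (Fin d) => ‖z‖ ^ s) (ball 0 1) volume := by
  have hd0 : 0 < d := by
    by_contra h
    push_neg at h
    interval_cases d <;> simp at hds <;> linarith
  haveI : Nonempty (Fin d) := ⟨⟨0, hd0⟩⟩
  haveI : Nontrivial (EuclideanSpace ℝ (Fin d)) := by
    have := finrank_euclideanSpace_fin (𝕜 := ℝ) (n := d)
    exact Module.nontrivial_of_finrank_pos
      (by omega : 0 < Module.finrank ℝ (EuclideanSpace ℝ (Fin d)))
  constructor
  · exact (Measurable.aestronglyMeasurable (by fun_prop)).restrict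
  · rw [HasFiniteIntegral, lintegral_enorm_of_nonneg (fun z => rpow_nonneg (norm_nonneg z) s)]
    set S : ℕ → Set (EuclideanSpace ℝ (Fin d)) :=
      fun n => {z | ((1:ℝ)/2) ^ (n+1) ≤ ‖z‖} ∩ ball 0 (((1:ℝ)/2) ^ n) with hS
    have hcover : ball (0 : EuclideanSpace ℝ (Fin d)) 1 ⊆ {0} ∪ ⋃ n, S n := by
      intro z hz
      rcases eq_or_ne z 0 with rfl | hz0
      · exact Or.inl rfl
      right
      have hz01 : 0 < ‖z‖ := norm_pos_iff.2 hz0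
      have hz1 : ‖z‖ < 1 := mem_ball_zero_iff.1 hz
      obtain ⟨n, hn⟩ := exists_pow_lt_of_lt_one hz01 (by norm_num : (1:ℝ)/2 < 1)
      have hex : ∃ k, ((1:ℝ)/2) ^ (k+1) ≤ ‖z‖ :=
        ⟨n, le_of_lt (lt_of_le_of_lt (pow_le_pow_of_le_one (by norm_num) (by norm_num)
          (by omega)) hn)⟩
      set m := Nat.find hex with hm
      refine mem_iUnion.2 ⟨m, Nat.find_spec hex, ?_⟩
      rw [mem_ball_zero_iff]
      rcases Nat.eq_zero_or_pos m with h0 | hpos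
      · rw [h0, pow_zero]; exact hz1
      · have := Nat.find_min hex (Nat.sub_lt hpos one_pos)
        push_neg at this
        have : ‖z‖ < ((1:ℝ)/2) ^ (m - 1 + 1) := this
        rwa [Nat.sub_add_cancel hpos] at this
    have hterm : ∀ n : ℕ, (∫⁻ z in S n, ENNReal.ofReal (‖z‖ ^ s)) ≤
        ENNReal.ofReal ((((1:ℝ)/2) ^ s) ^ (n+1)) *
          (ENNReal.ofReal ((((1:ℝ)/2) ^ d) ^ n) *
            volume (ball (0 : EuclideanSpace ℝ (Fin d)) 1)) := by
      intro n
      have hmeas : MeasurableSet (S n) :=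
        ((isClosed_le continuous_const continuous_norm).measurableSet).inter measurableSet_ball
      have hb : ∀ z ∈ S n, ENNReal.ofReal (‖z‖ ^ s) ≤
          ENNReal.ofReal ((((1:ℝ)/2) ^ s) ^ (n+1)) := by
        intro z hzS
        apply ENNReal.ofReal_le_ofReal
        have h1 : (0:ℝ) < ((1:ℝ)/2) ^ (n+1) := by positivity
        have h2 : ((1:ℝ)/2) ^ (n+1) ≤ ‖z‖ := hzS.1
        calc ‖z‖ ^ s ≤ (((1:ℝ)/2) ^ (n+1)) ^ s := rpow_le_rpow_of_nonpos h1 h2 hs.le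
          _ = (((1:ℝ)/2) ^ s) ^ (n+1) := by
              rw [← rpow_natCast ((1:ℝ)/2) (n+1), ← rpow_mul (by norm_num), mul_comm,
                rpow_mul (by norm_num), rpow_natCast]
      calc (∫⁻ z in S n, ENNReal.ofReal (‖z‖ ^ s))
          ≤ ∫⁻ _ in S n, ENNReal.ofReal ((((1:ℝ)/2) ^ s) ^ (n+1)) :=
            setLIntegral_mono' hmeas hb
        _ = ENNReal.ofReal ((((1:ℝ)/2) ^ s) ^ (n+1)) * volume (S n) := setLIntegral_const _ _
        _ ≤ ENNReal.ofReal ((((1:ℝ)/2) ^ s) ^ (n+1)) *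
            (ENNReal.ofReal ((((1:ℝ)/2) ^ d) ^ n) *
              volume (ball (0 : EuclideanSpace ℝ (Fin d)) 1)) := by
            gcongr
            calc volume (S n) ≤ volume (ball (0 : EuclideanSpace ℝ (Fin d)) (((1:ℝ)/2) ^ n)) :=
                  measure_mono inter_subset_right
              _ = ENNReal.ofReal ((((1:ℝ)/2) ^ n) ^ Module.finrank ℝ (EuclideanSpace ℝ (Fin d))) *
                  volume (ball (0 : EuclideanSpace ℝ (Fin d)) 1) :=
                  Measure.addHaar_ball volume 0 (by positivity)
              _ = ENNReal.ofReal ((((1:ℝ)/2) ^ d) ^ n) *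
                  volume (ball (0 : EuclideanSpace ℝ (Fin d)) 1) := by
                  rw [finrank_euclideanSpace_fin, ← pow_mul, ← pow_mul, Nat.mul_comm]
    have hsum : (∑' n : ℕ, ENNReal.ofReal ((((1:ℝ)/2) ^ s) ^ (n+1)) *
        (ENNReal.ofReal ((((1:ℝ)/2) ^ d) ^ n) *
          volume (ball (0 : EuclideanSpace ℝ (Fin d)) 1))) < ⊤ := by
      set Q := ENNReal.ofReal (((1:ℝ)/2) ^ s) with hQ
      set P := ENNReal.ofReal (((1:ℝ)/2) ^ d) with hP
      have hrw : ∀ n : ℕ, ENNReal.ofReal ((((1:ℝ)/2) ^ s) ^ (n+1)) *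
          (ENNReal.ofReal ((((1:ℝ)/2) ^ d) ^ n) *
            volume (ball (0 : EuclideanSpace ℝ (Fin d)) 1)) =
          (Q * volume (ball (0 : EuclideanSpace ℝ (Fin d)) 1)) * (Q * P) ^ n := by
        intro n
        rw [ENNReal.ofReal_pow (by positivity), ENNReal.ofReal_pow (by positivity), ← hQ, ← hP,
          pow_succ, mul_pow]
        ring
      simp only [hrw]
      rw [ENNReal.tsum_mul_left, ENNReal.tsum_geometric]
      have hQP : Q * P < 1 := by
        rw [hQ, hP, ← ENNReal.ofReal_mul (by positivity)]
        apply ENNReal.ofReal_lt_one.2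
        have : ((1:ℝ)/2) ^ s * ((1:ℝ)/2) ^ (d:ℕ) = ((1:ℝ)/2) ^ (s + d) := by
          rw [← rpow_natCast ((1:ℝ)/2) d, ← rpow_add (by norm_num)]
        rw [this]
        exact rpow_lt_one (by norm_num) (by norm_num) (by linarith)
      apply ENNReal.mul_lt_top
      · exact ENNReal.mul_lt_top ENNReal.ofReal_lt_top measure_ball_lt_top
      · apply ENNReal.inv_lt_top.2
        simp [tsub_pos_iff_lt, hQP]
    calc (∫⁻ z in ball (0 : EuclideanSpace ℝ (Fin d)) 1, ENNReal.ofReal (‖z‖ ^ s))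
        ≤ ∫⁻ z in ({0} ∪ ⋃ n, S n : Set (EuclideanSpace ℝ (Fin d))), ENNReal.ofReal (‖z‖ ^ s) :=
          lintegral_mono_set hcover
      _ ≤ (∫⁻ z in ({0} : Set (EuclideanSpace ℝ (Fin d))), ENNReal.ofReal (‖z‖ ^ s)) +
          ∫⁻ z in (⋃ n, S n), ENNReal.ofReal (‖z‖ ^ s) := lintegral_union_le _ _ _
      _ ≤ 0 + ∑' n : ℕ, ∫⁻ z in S n, ENNReal.ofReal (‖z‖ ^ s) := by
          gcongr
          · rw [Measure.restrict_singleton, measure_singleton]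
            simp
          · exact lintegral_iUnion_le _ _
      _ ≤ 0 + ∑' n : ℕ, ENNReal.ofReal ((((1:ℝ)/2) ^ s) ^ (n+1)) *
          (ENNReal.ofReal ((((1:ℝ)/2) ^ d) ^ n) *
            volume (ball (0 : EuclideanSpace ℝ (Fin d)) 1)) := by
          gcongr
          exact hterm _
      _ < ⊤ := by simpa using hsum

/-- Hölder continuity on a set implies continuity on that set. -/
lemma holder_continuousOn {d : ℕ} {D : Set (EuclideanSpace ℝ (Fin d))} {γ K : ℝ}
    (hγ : 0 < γ) (hK : 0 < K) {φ : EuclideanSpace ℝ (Fin d) → ℝ}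
    (hφH : ∀ u ∈ closure D, ∀ v ∈ closure D, |φ u - φ v| ≤ K * ‖u - v‖ ^ γ) :
    ContinuousOn φ (closure D) := by
  intro u hu
  rw [Metric.continuousWithinAt_iff]
  intro ε hε
  have hbase : (0:ℝ) < ε / (2 * K) := by positivity
  refine ⟨(ε / (2 * K)) ^ γ⁻¹, rpow_pos_of_pos hbase _, ?_⟩
  intro y hy hdist
  have h1 : |φ y - φ u| ≤ K * ‖y - u‖ ^ γ := hφH y hy u hu
  have h2 : ‖y - u‖ ^ γ ≤ ((ε / (2 * K)) ^ γ⁻¹) ^ γ := by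
    apply rpow_le_rpow (norm_nonneg _) _ hγ.le
    rw [← dist_eq_norm]
    exact hdist.le
  have h3 : ((ε / (2 * K)) ^ γ⁻¹) ^ γ = ε / (2 * K) := by
    rw [← Real.rpow_mul hbase.le, inv_mul_cancel₀ hγ.ne', Real.rpow_one]
  rw [Real.dist_eq]
  calc |φ y - φ u| ≤ K * ‖y - u‖ ^ γ := h1
    _ ≤ K * (ε / (2 * K)) := by rw [← h3]; exact mul_le_mul_of_nonneg_left h2 hK.le
    _ = ε / 2 := by field_simp
    _ < ε := by linarith

variable {d : ℕ} {D : Set (EuclideanSpace ℝ (Fin d))} {x : EuclideanSpace ℝ (Fin d)}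

/-- The set of admissible parameters `t` for the segment from `x` towards `x + z`. -/
def Tset (D : Set (EuclideanSpace ℝ (Fin d))) (x z : EuclideanSpace ℝ (Fin d)) : Set ℝ :=
  {t : ℝ | t ∈ Set.Icc (0 : ℝ) 1 ∧ x + t • z ∈ closure D}

lemma lamT_eq (z : EuclideanSpace ℝ (Fin d)) : lamT D x (x + z) = sSup (Tset D x z) := by
  simp only [lamT, Tset, add_sub_cancel_left]

lemma Tset_zero_mem (hx : x ∈ closure D) (z : EuclideanSpace ℝ (Fin d)) :
    (0:ℝ) ∈ Tset D x z := by
  refine ⟨⟨le_refl _, zero_le_one⟩, ?_⟩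
  simpa using hx

lemma Tset_bddAbove (z : EuclideanSpace ℝ (Fin d)) : BddAbove (Tset D x z) :=
  ⟨1, fun _ ht => ht.1.2⟩

lemma Tset_isClosed (z : EuclideanSpace ℝ (Fin d)) : IsClosed (Tset D x z) := by
  have : Tset D x z = Set.Icc (0:ℝ) 1 ∩ (fun t : ℝ => x + t • z) ⁻¹' closure D := rfl
  rw [this]
  exact isClosed_Icc.inter (IsClosed.preimage (continuous_const.add
    (continuous_id.smul continuous_const)) isClosed_closure)

lemma lamT_mem (hx : x ∈ closure D) (z : EuclideanSpace ℝ (Fin d)) :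
    lamT D x (x + z) ∈ Tset D x z := by
  rw [lamT_eq]
  exact (Tset_isClosed z).csSup_mem ⟨0, Tset_zero_mem hx z⟩ (Tset_bddAbove z)

lemma Tset_down (hconv : Convex ℝ D) (hx : x ∈ closure D) {z : EuclideanSpace ℝ (Fin d)}
    {t : ℝ} (ht : t ∈ Tset D x z) {s : ℝ} (hs0 : 0 ≤ s) (hst : s ≤ t) : s ∈ Tset D x z := by
  refine ⟨⟨hs0, hst.trans ht.1.2⟩, ?_⟩
  rcases eq_or_lt_of_le (hs0.trans hst) with h0 | htpos
  · have hs : s = 0 := le_antisymm (hst.trans h0.symm.le) hs0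
    subst hs
    simpa using hx
  · have hid : x + s • z = (1 - s/t) • x + (s/t) • (x + t • z) := by
      rw [smul_add, smul_smul, div_mul_cancel₀ _ (ne_of_gt htpos), sub_smul, one_smul]
      abel
    rw [hid]
    have hb : 0 ≤ s / t := by positivity
    have ha : 0 ≤ 1 - s / t := by
      rw [sub_nonneg]
      exact div_le_one_of_le₀ hst htpos.le
    exact (hconv.closure) hx ht.2 ha hb (by ring)

lemma lamT_measurable (hconv : Convex ℝ D) (hx : x ∈ closure D) :
    Measurable (fun z : EuclideanSpace ℝ (Fin d) => lamT D x (x + z)) := by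
  apply measurable_of_Ici
  intro c
  rcases le_or_gt c 0 with hc | hc
  · have : (fun z : EuclideanSpace ℝ (Fin d) => lamT D x (x + z)) ⁻¹' Set.Ici c = Set.univ := by
      ext z
      simp only [Set.mem_preimage, Set.mem_Ici, Set.mem_univ, iff_true]
      exact hc.trans (lamT_mem hx z).1.1
    rw [this]; exact MeasurableSet.univ
  rcases le_or_gt c 1 with hc1 | hc1
  · have : (fun z : EuclideanSpace ℝ (Fin d) => lamT D x (x + z)) ⁻¹' Set.Ici c =
        {z | x + c • z ∈ closure D} := by
      ext z
      simp only [Set.mem_preimage, Set.mem_Ici, Set.mem_setOf_eq]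
      constructor
      · intro hcz
        exact (Tset_down hconv hx (lamT_mem hx z) hc.le hcz).2
      · intro hm
        rw [lamT_eq]
        exact le_csSup (Tset_bddAbove z) ⟨⟨hc.le, hc1⟩, hm⟩
    rw [this]
    exact (IsClosed.preimage (show Continuous (fun z : EuclideanSpace ℝ (Fin d) => x + c • z) by fun_prop)
      isClosed_closure).measurableSet
  · have : (fun z : EuclideanSpace ℝ (Fin d) => lamT D x (x + z)) ⁻¹' Set.Ici c = ∅ := by
      ext z
      simp only [Set.mem_preimage, Set.mem_Ici, Set.mem_empty_iff_false, iff_false, not_le]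
      exact lt_of_le_of_lt (lamT_mem hx z).1.2 hc1
    rw [this]; exact MeasurableSet.empty

end Aux

open Real

/-- for `α ∈ (0,1)`, `D ⊂ ℝ^d` nonempty open bounded strictly convex,
`γ ∈ (α,1]`, `K > 0` and `φ` twice continuously differentiable on `D` and `γ`-Hölder
on `closure D` with constant `K`, the function `𝓛φ` is bounded on `D`. -/
theorem stmt_4 (d : ℕ) (hd : 2 ≤ d) (α : ℝ) (hα : α ∈ Set.Ioo (0 : ℝ) 1)
    (D : Set (EuclideanSpace ℝ (Fin d)))
    (hne : D.Nonempty) (hop : IsOpen D) (hbd : IsBounded D) (hconv : Convex ℝ D)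
    (hstrict : ∀ a b : EuclideanSpace ℝ (Fin d), a ≠ b → ¬ segment ℝ a b ⊆ frontier D)
    (γ K : ℝ) (hγ : γ ∈ Set.Ioc α 1) (hK : 0 < K)
    (φ : EuclideanSpace ℝ (Fin d) → ℝ) (hφ2 : ContDiffOn ℝ 2 φ D)
    (hφH : ∀ u ∈ closure D, ∀ v ∈ closure D, |φ u - φ v| ≤ K * ‖u - v‖ ^ γ) :
    ∃ M : ℝ, ∀ x ∈ D, |Lgen D α 1 φ x| ≤ M := by
  obtain ⟨hα0, hα1⟩ := hα
  obtain ⟨hγα, hγ1⟩ := hγ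
  have hγ0 : 0 < γ := hα0.trans hγα
  have hd2 : (2:ℝ) ≤ (d:ℝ) := by exact_mod_cast hd
  -- a bound on distances within `closure D`
  obtain ⟨r, hrD⟩ := hbd.subset_closedBall 0
  set R : ℝ := 2 * max r 0 with hR
  have hR0 : 0 ≤ R := by positivity
  have hRd : ∀ u ∈ closure D, ∀ v ∈ closure D, ‖u - v‖ ≤ R := by
    have hcl : closure D ⊆ closedBall 0 (max r 0) :=
      closure_minimal (hrD.trans (closedBall_subset_closedBall (le_max_left _ _))) isClosed_closedBall
    intro u hu v hv
    have h1 : ‖u‖ ≤ max r 0 := by simpa [mem_closedBall_zero_iff] using hcl hu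
    have h2 : ‖v‖ ≤ max r 0 := by simpa [mem_closedBall_zero_iff] using hcl hv
    calc ‖u - v‖ ≤ ‖u‖ + ‖v‖ := norm_sub_le u v
      _ ≤ R := by rw [hR]; linarith
  set β : ℝ := (d:ℝ) + α with hβ
  have hexp : -(d:ℝ) - α = -β := by rw [hβ]; ring
  have hβ2 : (2:ℝ) ≤ β := by rw [hβ]; linarith
  have hg1 : -(d:ℝ) < γ - β := by rw [hβ]; linarith
  have hg2 : γ - β < 0 := by linarith
  have hq1 : -(d:ℝ) < 1 - β := by rw [hβ]; linarith
  have hq2 : 1 - β < 0 := by linarith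
  -- master bound
  set B : EuclideanSpace ℝ (Fin d) → ℝ := fun z =>
    if ‖z‖ < 1 then K * ‖z‖ ^ (γ - β) else (K * R ^ γ * 2 ^ β) * (1 + ‖z‖) ^ (-β) with hBdef
  have hBint : Integrable B := by
    rw [← integrableOn_univ, ← union_compl_self (ball (0:EuclideanSpace ℝ (Fin d)) 1)]
    apply IntegrableOn.union
    · apply IntegrableOn.congr_fun ((aux_ball hg1 hg2).const_mul K) ?_ measurableSet_ball
      intro z hz
      simp only [hBdef]
      rw [if_pos (mem_ball_zero_iff.1 hz)]
    · have ht : Integrable fun z : EuclideanSpace ℝ (Fin d) =>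
          (K * R ^ γ * 2 ^ β) * (1 + ‖z‖) ^ (-β) := by
        apply Integrable.const_mul
        apply integrable_one_add_norm
        rw [finrank_euclideanSpace_fin, hβ]; linarith
      apply IntegrableOn.congr_fun ht.integrableOn ?_ measurableSet_ball.compl
      intro z hz
      simp only [hBdef]
      rw [if_neg (by simpa [mem_ball_zero_iff] using hz)]
  refine ⟨∫ z, B z, ?_⟩
  intro x hx
  have hxc : x ∈ closure D := subset_closure hx
  set P : EuclideanSpace ℝ (Fin d) → ℝ := fun z => lamT D x (x + z) with hPdef
  have hPmem : ∀ z, P z ∈ Tset D x z := fun z => lamT_mem hxc z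
  set f : EuclideanSpace ℝ (Fin d) → EuclideanSpace ℝ (Fin d) := fun z => x + P z • z with hfdef
  have hLam : ∀ z, Lam D x (x + z) = f z := by
    intro z
    simp only [Lam, hfdef, hPdef, lamT, add_sub_cancel_left]
  have hfD : ∀ z, f z ∈ closure D := fun z => (hPmem z).2
  have hfnorm : ∀ z, ‖f z - x‖ ≤ ‖z‖ := by
    intro z
    simp only [hfdef, add_sub_cancel_left]
    rw [norm_smul, Real.norm_eq_abs, abs_of_nonneg (hPmem z).1.1]
    exact mul_le_of_le_one_left (norm_nonneg z) (hPmem z).1.2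
  have hfmeas : Measurable f :=
    measurable_const.add ((lamT_measurable hconv hxc).smul measurable_id)
  have hφc := holder_continuousOn hγ0 hK hφH
  have hφf : Measurable (fun z => φ (f z)) := by
    have hrfl : (fun z => φ (f z)) =
        ((closure D).restrict φ) ∘ (fun z => (⟨f z, hfD z⟩ : closure D)) := rfl
    rw [hrfl]
    exact ((continuousOn_iff_continuous_restrict.1 hφc).measurable).comp (hfmeas.subtype_mk)
  set g : EuclideanSpace ℝ (Fin d) → ℝ :=
    fun z => (φ (f z) - φ x) * ‖z‖ ^ (-(d:ℝ) - α) with hgdef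
  set v := gradient φ x with hv
  set q : EuclideanSpace ℝ (Fin d) → ℝ :=
    fun z => (if ‖z‖ < 1 then ⟪z, v⟫ else 0) * ‖z‖ ^ (-(d:ℝ) - α) with hqdef
  have hwnn : ∀ z : EuclideanSpace ℝ (Fin d), 0 ≤ ‖z‖ ^ (-(d:ℝ) - α) :=
    fun z => rpow_nonneg (norm_nonneg z) _
  have hexp0 : -(d:ℝ) - α ≠ 0 := by rw [hexp]; intro hcc; rw [neg_eq_zero] at hcc; linarith
  have hgbound : ∀ z, ‖g z‖ ≤ B z := by
    intro z
    simp only [hgdef, hBdef]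
    rw [Real.norm_eq_abs, abs_mul, abs_of_nonneg (hwnn z)]
    by_cases hz1 : ‖z‖ < 1
    · rw [if_pos hz1]
      rcases eq_or_ne z 0 with rfl | hz0
      · rw [norm_zero, Real.zero_rpow hexp0, Real.zero_rpow (ne_of_lt hg2)]
        simp
      · have hzpos : 0 < ‖z‖ := norm_pos_iff.2 hz0
        have hHol : |φ (f z) - φ x| ≤ K * ‖z‖ ^ γ := by
          calc |φ (f z) - φ x| ≤ K * ‖f z - x‖ ^ γ := hφH _ (hfD z) _ hxc
            _ ≤ K * ‖z‖ ^ γ :=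
                mul_le_mul_of_nonneg_left
                  (rpow_le_rpow (norm_nonneg _) (hfnorm z) hγ0.le) hK.le
        calc |φ (f z) - φ x| * ‖z‖ ^ (-(d:ℝ) - α)
            ≤ (K * ‖z‖ ^ γ) * ‖z‖ ^ (-(d:ℝ) - α) :=
              mul_le_mul_of_nonneg_right hHol (hwnn z)
          _ = K * ‖z‖ ^ (γ - β) := by
              rw [mul_assoc, ← Real.rpow_add hzpos]
              congr 1
              rw [hexp]
              ring
    · rw [if_neg hz1]
      push_neg at hz1
      have hHol : |φ (f z) - φ x| ≤ K * R ^ γ := by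
        calc |φ (f z) - φ x| ≤ K * ‖f z - x‖ ^ γ := hφH _ (hfD z) _ hxc
          _ ≤ K * R ^ γ :=
              mul_le_mul_of_nonneg_left
                (rpow_le_rpow (norm_nonneg _) (hRd _ (hfD z) _ hxc) hγ0.le) hK.le
      have hw : ‖z‖ ^ (-(d:ℝ) - α) ≤ 2 ^ β * (1 + ‖z‖) ^ (-β) := by
        have hzpos : (0:ℝ) < ‖z‖ := lt_of_lt_of_le one_pos hz1
        have hhalf : (0:ℝ) < (1 + ‖z‖)/2 := by positivity
        have hle : (1 + ‖z‖)/2 ≤ ‖z‖ := by linarith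
        rw [hexp]
        calc ‖z‖ ^ (-β) ≤ ((1 + ‖z‖)/2) ^ (-β) :=
              rpow_le_rpow_of_nonpos hhalf hle (by linarith)
          _ = 2 ^ β * (1 + ‖z‖) ^ (-β) := by
              rw [Real.div_rpow (by positivity) (by norm_num),
                Real.rpow_neg (by norm_num : (0:ℝ) ≤ 2), div_eq_mul_inv, inv_inv]
              ring
      calc |φ (f z) - φ x| * ‖z‖ ^ (-(d:ℝ) - α)
          ≤ (K * R ^ γ) * (2 ^ β * (1 + ‖z‖) ^ (-β)) :=
            mul_le_mul hHol hw (hwnn z) (by positivity)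
        _ = (K * R ^ γ * 2 ^ β) * (1 + ‖z‖) ^ (-β) := by ring
  have hgmeas : AEStronglyMeasurable g volume :=
    ((hφf.sub measurable_const).mul (by fun_prop)).aestronglyMeasurable
  have hgint : Integrable g := hBint.mono' hgmeas (Filter.Eventually.of_forall hgbound)
  -- the gradient term
  set B' : EuclideanSpace ℝ (Fin d) → ℝ :=
    fun z => if ‖z‖ < 1 then ‖v‖ * ‖z‖ ^ (1 - β) else 0 with hB'def
  have hB'int : Integrable B' := by
    rw [← integrableOn_univ, ← union_compl_self (ball (0:EuclideanSpace ℝ (Fin d)) 1)]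
    apply IntegrableOn.union
    · apply IntegrableOn.congr_fun ((aux_ball hq1 hq2).const_mul ‖v‖) ?_ measurableSet_ball
      intro z hz
      simp only [hB'def]
      rw [if_pos (mem_ball_zero_iff.1 hz)]
    · apply IntegrableOn.congr_fun (integrable_zero _ _ _).integrableOn ?_ measurableSet_ball.compl
      intro z hz
      simp only [hB'def]
      rw [if_neg (by simpa [mem_ball_zero_iff] using hz)]
      rfl
  have hqmeas : Measurable q := by
    apply Measurable.mul ?_ (by fun_prop)
    apply Measurable.ite ?_ ?_ measurable_const
    · exact measurableSet_lt (by fun_prop) measurable_const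
    · exact (continuous_id.inner continuous_const).measurable
  have hqbound : ∀ z, ‖q z‖ ≤ B' z := by
    intro z
    simp only [hqdef, hB'def]
    by_cases hz1 : ‖z‖ < 1
    · rw [if_pos hz1, if_pos hz1]
      rcases eq_or_ne z 0 with rfl | hz0
      · rw [norm_zero, Real.zero_rpow hexp0, Real.zero_rpow (ne_of_lt hq2)]
        simp
      · have hzpos : 0 < ‖z‖ := norm_pos_iff.2 hz0
        rw [Real.norm_eq_abs, abs_mul, abs_of_nonneg (hwnn z)]
        calc |⟪z, v⟫| * ‖z‖ ^ (-(d:ℝ) - α)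
            ≤ (‖z‖ * ‖v‖) * ‖z‖ ^ (-(d:ℝ) - α) :=
              mul_le_mul_of_nonneg_right (abs_real_inner_le_norm z v) (hwnn z)
          _ = ‖v‖ * ‖z‖ ^ (1 - β) := by
              rw [show ‖z‖ * ‖v‖ * ‖z‖ ^ (-(d:ℝ) - α)
                  = ‖v‖ * (‖z‖ ^ (1:ℝ) * ‖z‖ ^ (-(d:ℝ) - α)) by rw [Real.rpow_one]; ring,
                ← Real.rpow_add hzpos]
              congr 1
              rw [hexp]
              ring
    · rw [if_neg hz1, if_neg hz1]
      simp
  have hqint : Integrable q :=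
    hB'int.mono' hqmeas.aestronglyMeasurable (Filter.Eventually.of_forall hqbound)
  have hqodd : ∀ z, q (-z) = - q z := by
    intro z
    simp only [hqdef, norm_neg]
    split_ifs with hc
    · rw [inner_neg_left]; ring
    · ring
  have hq0 : ∫ z, q z = 0 := by
    have h1 := MeasureTheory.integral_neg_eq_self q
      (volume : Measure (EuclideanSpace ℝ (Fin d)))
    simp only [hqodd] at h1
    rw [integral_neg] at h1
    linarith
  have hsplit : Lgen D α 1 φ x = ∫ z, (g z - q z) := by
    simp only [Lgen, hLam, ← hv, hgdef, hqdef]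
    congr 1
    funext z
    ring
  rw [hsplit, integral_sub hgint hqint, hq0, sub_zero]
  calc |∫ z, g z| ≤ ∫ z, ‖g z‖ := by
        rw [← Real.norm_eq_abs]
        exact norm_integral_le_integral_norm g
    _ ≤ ∫ z, B z := integral_mono hgint.norm hBint hgbound
end
end

section
/- Let D ⊂ ℝ² satisfy Assumption (D) with data (ε₀, η, n) (i.e. d = 2). Then there exist L > 0 and a family (A_y)_{y ∈ ∂D} of linear isometries of ℝ² such that A_y e₁ = n(y) for every y ∈ ∂D and ‖A_y − A_{y'}‖ ≤ L |y − y'| for all y, y' ∈ ∂D. -/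
open Metric Set Bornology
open scoped RealInnerProductSpace

noncomputable section

/-- The first vector of the canonical basis of `ℝ^d`. -/
def e1 (d : ℕ) : EuclideanSpace ℝ (Fin d) :=
  if h : 0 < d then EuclideanSpace.single (⟨0, h⟩ : Fin d) 1 else 0

/-- The projection `ℝ^d → ℝ^{d−1}`, `u ↦ (u·e₂, …, u·e_d)`. -/
def projTail (d : ℕ) (u : EuclideanSpace ℝ (Fin d)) :
    EuclideanSpace ℝ (Fin (d - 1)) :=
  (EuclideanSpace.equiv (Fin (d - 1)) ℝ).symm fun i => u ⟨i.1 + 1, by have := i.isLt; omega⟩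

/-- Assumption (D): `D ⊂ ℝ^d` (`d ≥ 2`) is nonempty, open, bounded and convex, `n x` is a
unit vector for `x ∈ ∂D`, and around each boundary point `x` the domain is, in suitable
isometric coordinates sending `e₁` to `n x`, the epigraph of a `C³` uniformly strongly
convex function `ψ` with `ψ(0)=0`, `∇ψ(0)=0`, `Hess ψ ≥ η`, `‖D²ψ‖+‖D³ψ‖ ≤ η⁻¹`. -/
structure AssumptionD (d : ℕ) (D : Set (EuclideanSpace ℝ (Fin d))) (ε₀ η : ℝ)
    (n : EuclideanSpace ℝ (Fin d) → EuclideanSpace ℝ (Fin d)) : Prop where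
  dim_ge : 2 ≤ d
  eps_pos : 0 < ε₀
  eps_lt_one : ε₀ < 1
  eta_pos : 0 < η
  nonempty : D.Nonempty
  isOpen : IsOpen D
  isBounded : Bornology.IsBounded D
  convex : Convex ℝ D
  normal_norm : ∀ x ∈ frontier D, ‖n x‖ = 1
  chart : ∀ x ∈ frontier D,
    ∃ A₀ : EuclideanSpace ℝ (Fin d) →ₗᵢ[ℝ] EuclideanSpace ℝ (Fin d),
      A₀ (e1 d) = n x ∧
      ∃ ψ : EuclideanSpace ℝ (Fin (d - 1)) → ℝ,
        ContDiffOn ℝ 3 ψ (Metric.ball (0 : EuclideanSpace ℝ (Fin (d - 1))) ε₀) ∧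
        (∀ v ∈ Metric.ball (0 : EuclideanSpace ℝ (Fin (d - 1))) ε₀, 0 ≤ ψ v) ∧
        ψ 0 = 0 ∧
        fderiv ℝ ψ 0 = 0 ∧
        (∀ v ∈ Metric.ball (0 : EuclideanSpace ℝ (Fin (d - 1))) ε₀,
          ∀ w : EuclideanSpace ℝ (Fin (d - 1)),
            η * ‖w‖ ^ 2 ≤ iteratedFDeriv ℝ 2 ψ v ![w, w]) ∧
        (∀ v ∈ Metric.ball (0 : EuclideanSpace ℝ (Fin (d - 1))) ε₀,
          ‖iteratedFDeriv ℝ 2 ψ v‖ + ‖iteratedFDeriv ℝ 3 ψ v‖ ≤ η⁻¹) ∧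
        D ∩ Metric.ball x ε₀ =
          (fun u : EuclideanSpace ℝ (Fin d) => x + A₀ u) ''
            {u : EuclideanSpace ℝ (Fin d) |
              u ∈ Metric.ball (0 : EuclideanSpace ℝ (Fin d)) ε₀ ∧
              ψ (projTail d u) < ⟪u, e1 d⟫}


/-! ### Auxiliary lemmas -/


def rotL (v : EuclideanSpace ℝ (Fin 2)) :
    EuclideanSpace ℝ (Fin 2) →ₗ[ℝ] EuclideanSpace ℝ (Fin 2) where
  toFun u := WithLp.toLp 2 ![v 0 * u 0 - v 1 * u 1, v 1 * u 0 + v 0 * u 1]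
  map_add' u w := by
    ext i
    fin_cases i <;>
      · rw [WithLp.ofLp_add, Pi.add_apply]
        simp [Matrix.cons_val_zero, Matrix.cons_val_one, Matrix.head_cons,
          PiLp.add_apply]
        ring
  map_smul' c u := by
    ext i
    show ![v 0 * (c • u) 0 - v 1 * (c • u) 1, v 1 * (c • u) 0 + v 0 * (c • u) 1] i
        = c • ![v 0 * u 0 - v 1 * u 1, v 1 * u 0 + v 0 * u 1] i
    have h0 : (c • u) 0 = c * u 0 := rfl
    have h1 : (c • u) 1 = c * u 1 := rfl
    fin_cases i <;> simp [h0, h1, smul_eq_mul] <;> ring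

lemma rotL_apply (v u : EuclideanSpace ℝ (Fin 2)) (i : Fin 2) :
    rotL v u i = ![v 0 * u 0 - v 1 * u 1, v 1 * u 0 + v 0 * u 1] i := rfl

lemma euc_norm_sq (u : EuclideanSpace ℝ (Fin 2)) : ‖u‖ ^ 2 = u 0 ^ 2 + u 1 ^ 2 := by
  rw [EuclideanSpace.norm_sq_eq, Fin.sum_univ_two, Real.norm_eq_abs, Real.norm_eq_abs, sq_abs, sq_abs]

lemma rotL_norm (v u : EuclideanSpace ℝ (Fin 2)) : ‖rotL v u‖ = ‖v‖ * ‖u‖ := by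
  have h : ‖rotL v u‖ ^ 2 = (‖v‖ * ‖u‖) ^ 2 := by
    rw [euc_norm_sq, mul_pow, euc_norm_sq, euc_norm_sq]
    have h0 : rotL v u 0 = v 0 * u 0 - v 1 * u 1 := rfl
    have h1 : rotL v u 1 = v 1 * u 0 + v 0 * u 1 := rfl
    rw [h0, h1]; ring
  have h2 := congrArg Real.sqrt h
  rwa [Real.sqrt_sq (norm_nonneg _), Real.sqrt_sq (by positivity)] at h2

def rotIso (v : EuclideanSpace ℝ (Fin 2)) (hv : ‖v‖ = 1) :
    EuclideanSpace ℝ (Fin 2) →ₗᵢ[ℝ] EuclideanSpace ℝ (Fin 2) where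
  toLinearMap := rotL v
  norm_map' u := by rw [rotL_norm, hv, one_mul]

lemma rotL_sub (v v' u : EuclideanSpace ℝ (Fin 2)) :
    rotL v u - rotL v' u = rotL (v - v') u := by
  ext i
  fin_cases i <;>
    simp [rotL_apply, PiLp.sub_apply] <;> ring

lemma euc1_norm_sq (w : EuclideanSpace ℝ (Fin 1)) : ‖w‖ ^ 2 = w 0 ^ 2 := by
  rw [EuclideanSpace.norm_sq_eq, Fin.sum_univ_one, Real.norm_eq_abs, sq_abs]

lemma e1_apply_0 : (e1 2) 0 = 1 := by
  simp [e1, EuclideanSpace.single_apply]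

lemma e1_apply_1 : (e1 2) 1 = 0 := by
  simp [e1, EuclideanSpace.single_apply]

lemma rot_e1 (v : EuclideanSpace ℝ (Fin 2)) (hv : ‖v‖ = 1) : rotIso v hv (e1 2) = v := by
  ext i
  have h : rotIso v hv (e1 2) i = ![v 0 * (e1 2) 0 - v 1 * (e1 2) 1,
      v 1 * (e1 2) 0 + v 0 * (e1 2) 1] i := rfl
  rw [h, e1_apply_0, e1_apply_1]
  fin_cases i <;> · show _ = _; simp; try ring

lemma inner_e1 (u : EuclideanSpace ℝ (Fin 2)) : ⟪u, e1 2⟫ = u 0 := by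
  rw [show ⟪u, e1 2⟫ = u 0 * e1 2 0 + u 1 * e1 2 1 from by
    simp [PiLp.inner_apply, Fin.sum_univ_two]; ring]
  rw [e1_apply_0, e1_apply_1]; ring

lemma projTail_apply (u : EuclideanSpace ℝ (Fin 2)) : projTail 2 u 0 = u 1 := rfl

lemma norm_projTail_le (u : EuclideanSpace ℝ (Fin 2)) : ‖projTail 2 u‖ ≤ ‖u‖ := by
  have h1 : ‖projTail 2 u‖ ^ 2 ≤ ‖u‖ ^ 2 := by
    rw [euc_norm_sq]
    rw [show ‖projTail 2 u‖ ^ 2 = (u 1) ^ 2 from by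
      rw [euc1_norm_sq (projTail 2 u), projTail_apply]]
    nlinarith [sq_nonneg (u 0)]
  calc ‖projTail 2 u‖ = √(‖projTail 2 u‖ ^ 2) := by rw [Real.sqrt_sq (norm_nonneg _)]
    _ ≤ √(‖u‖ ^ 2) := Real.sqrt_le_sqrt h1
    _ = ‖u‖ := Real.sqrt_sq (norm_nonneg _)


lemma fderiv_norm_le_iter1 {E : Type*} [NormedAddCommGroup E] [NormedSpace ℝ E] {ψ : E → ℝ} (w : E) :
    ‖fderiv ℝ ψ w‖ ≤ ‖iteratedFDeriv ℝ 1 ψ w‖ := by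
  apply ContinuousLinearMap.opNorm_le_bound _ (norm_nonneg _)
  intro z
  have h : fderiv ℝ ψ w z = iteratedFDeriv ℝ 1 ψ w ![z] := by
    rw [iteratedFDeriv_one_apply]; simp
  rw [h]
  calc ‖iteratedFDeriv ℝ 1 ψ w ![z]‖ ≤ ‖iteratedFDeriv ℝ 1 ψ w‖ * ∏ i : Fin 1, ‖(![z] : Fin 1 → _) i‖ :=
        ContinuousMultilinearMap.le_opNorm _ _
    _ = ‖iteratedFDeriv ℝ 1 ψ w‖ * ‖z‖ := by simp

lemma psi_deriv_bound {ε₀ η : ℝ} (hη : 0 < η)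
    {E : Type*} [NormedAddCommGroup E] [NormedSpace ℝ E] {ψ : E → ℝ}
    (hψ : ContDiffOn ℝ 3 ψ (ball 0 ε₀))
    (hd : fderiv ℝ ψ 0 = 0)
    (hb : ∀ v ∈ ball (0 : E) ε₀,
      ‖iteratedFDeriv ℝ 2 ψ v‖ + ‖iteratedFDeriv ℝ 3 ψ v‖ ≤ η⁻¹) :
    ∀ w ∈ ball (0 : E) ε₀, ‖fderiv ℝ ψ w‖ ≤ η⁻¹ * ‖w‖ := by
  set G := iteratedFDeriv ℝ 1 ψ with hG
  have hGdiff : ∀ x ∈ ball (0 : E) ε₀, DifferentiableAt ℝ G x := by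
    intro x hx
    have h1 : DifferentiableOn ℝ (iteratedFDerivWithin ℝ 1 ψ (ball 0 ε₀)) (ball 0 ε₀) :=
      hψ.differentiableOn_iteratedFDerivWithin (by norm_num) isOpen_ball.uniqueDiffOn
    have h2 : DifferentiableAt ℝ (iteratedFDerivWithin ℝ 1 ψ (ball 0 ε₀)) x :=
      (h1 x hx).differentiableAt (isOpen_ball.mem_nhds hx)
    have h3 : iteratedFDerivWithin ℝ 1 ψ (ball 0 ε₀) =ᶠ[nhds x] G := by
      filter_upwards [isOpen_ball.mem_nhds hx] with z hz
      exact iteratedFDerivWithin_of_isOpen 1 isOpen_ball hz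
    exact h3.differentiableAt_iff.mp h2
  have hGfd : ∀ x ∈ ball (0 : E) ε₀, ‖fderiv ℝ G x‖ ≤ η⁻¹ := by
    intro x hx
    rw [hG, norm_fderiv_iteratedFDeriv]
    have := hb x hx
    have := norm_nonneg (iteratedFDeriv ℝ 3 ψ x)
    linarith
  have hG0 : G 0 = 0 := by
    ext m
    rw [hG, iteratedFDeriv_one_apply, hd]
    simp
  intro w hw
  have hε : (0:ℝ) < ε₀ := lt_of_le_of_lt dist_nonneg (mem_ball.1 hw)
  have key : ‖G w - G 0‖ ≤ η⁻¹ * ‖w - 0‖ :=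
    Convex.norm_image_sub_le_of_norm_fderiv_le hGdiff hGfd (convex_ball _ _)
      (mem_ball_self hε) hw
  rw [hG0, sub_zero, sub_zero] at key
  exact (fderiv_norm_le_iter1 w).trans key

lemma psi_quad {ε₀ η : ℝ} (hη : 0 < η)
    {E : Type*} [NormedAddCommGroup E] [NormedSpace ℝ E] {ψ : E → ℝ}
    (hψ : ContDiffOn ℝ 3 ψ (ball 0 ε₀)) (h0 : ψ 0 = 0)
    (hd : fderiv ℝ ψ 0 = 0)
    (hb : ∀ v ∈ ball (0 : E) ε₀,
      ‖iteratedFDeriv ℝ 2 ψ v‖ + ‖iteratedFDeriv ℝ 3 ψ v‖ ≤ η⁻¹) :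
    ∀ v ∈ ball (0 : E) ε₀, ψ v ≤ η⁻¹ * ‖v‖ ^ 2 := by
  intro v hv
  have hfd := psi_deriv_bound hη hψ hd hb
  have hvε : ‖v‖ < ε₀ := mem_ball_zero_iff.1 hv
  have hsub : closedBall (0 : E) ‖v‖ ⊆ ball 0 ε₀ :=
    closedBall_subset_ball hvε
  have hdiff : ∀ x ∈ closedBall (0 : E) ‖v‖, DifferentiableAt ℝ ψ x :=
    fun x hx => ((hψ.differentiableOn (by norm_num)) x (hsub hx)).differentiableAt
      (isOpen_ball.mem_nhds (hsub hx))
  have hbound : ∀ x ∈ closedBall (0 : E) ‖v‖,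
      ‖fderiv ℝ ψ x‖ ≤ η⁻¹ * ‖v‖ := by
    intro x hx
    calc ‖fderiv ℝ ψ x‖ ≤ η⁻¹ * ‖x‖ := hfd x (hsub hx)
      _ ≤ η⁻¹ * ‖v‖ := by
        have := mem_closedBall_zero_iff.1 hx
        have : (0:ℝ) ≤ η⁻¹ := by positivity
        nlinarith [mem_closedBall_zero_iff.1 hx]
  have key : ‖ψ v - ψ 0‖ ≤ η⁻¹ * ‖v‖ * ‖v - 0‖ :=
    Convex.norm_image_sub_le_of_norm_fderiv_le hdiff hbound (convex_closedBall _ _)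
      (mem_closedBall_self (norm_nonneg v)) (mem_closedBall_zero_iff.2 le_rfl)
  rw [h0, sub_zero, sub_zero] at key
  calc ψ v ≤ ‖ψ v‖ := le_abs_self _
    _ ≤ η⁻¹ * ‖v‖ * ‖v‖ := key
    _ = η⁻¹ * ‖v‖ ^ 2 := by ring



lemma inner_pos {D : Set (EuclideanSpace ℝ (Fin 2))} {ε₀ η : ℝ}
    {n : EuclideanSpace ℝ (Fin 2) → EuclideanSpace ℝ (Fin 2)}
    (hD : AssumptionD 2 D ε₀ η n) :
    ∀ y ∈ frontier D, ∀ z ∈ D, 0 < ⟪z - y, n y⟫ := by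
  intro y hy z hz
  obtain ⟨A₀, hA0e1, ψ, hψ, hψnn, hψ0, hψd, _, hψb, hset⟩ := hD.chart y hy
  have hyc : y ∈ closure D := frontier_subset_closure hy
  set t : ℝ := min (1/2) (ε₀ / (2 * (‖z - y‖ + 1))) with ht
  have hzy1 : (0:ℝ) < ‖z - y‖ + 1 := by positivity
  have ht0 : 0 < t := lt_min (by norm_num) (div_pos hD.eps_pos (by positivity))
  have ht1 : t < 1 := lt_of_le_of_lt (min_le_left _ _) (by norm_num)
  set p : EuclideanSpace ℝ (Fin 2) := t • z + (1 - t) • y with hp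
  have hpseg : p ∈ openSegment ℝ z y := ⟨t, 1 - t, ht0, by linarith, by ring, rfl⟩
  have hpD : p ∈ D := by
    have := hD.convex.openSegment_interior_closure_subset_interior
      (by rwa [hD.isOpen.interior_eq]) hyc hpseg
    rwa [hD.isOpen.interior_eq] at this
  have hpy : p - y = t • (z - y) := by
    rw [hp]; module
  have hpball : p ∈ ball y ε₀ := by
    rw [mem_ball, dist_eq_norm, hpy, norm_smul, Real.norm_eq_abs, abs_of_pos ht0]
    have h2 : t ≤ ε₀ / (2 * (‖z - y‖ + 1)) := min_le_right _ _
    have h3 : t * ‖z - y‖ ≤ ε₀ / 2 := by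
      rw [le_div_iff₀ (by positivity)] at h2
      nlinarith [norm_nonneg (z - y), hD.eps_pos, ht0]
    nlinarith [hD.eps_pos]
  have hpmem : p ∈ D ∩ ball y ε₀ := ⟨hpD, hpball⟩
  rw [hset] at hpmem
  obtain ⟨u, ⟨hu, hψu⟩, hpu⟩ := hpmem
  have hproj : projTail 2 u ∈ ball (0 : EuclideanSpace ℝ (Fin (2-1))) ε₀ := by
    rw [mem_ball_zero_iff]
    exact lt_of_le_of_lt (norm_projTail_le u) (mem_ball_zero_iff.1 hu)
  have h1 : (0:ℝ) < ⟪u, e1 2⟫ := lt_of_le_of_lt (hψnn _ hproj) hψu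
  have hpyA : p - y = A₀ u := by
    have : y + A₀ u = p := hpu
    rw [← this]; abel
  have h2 : ⟪p - y, n y⟫ = ⟪u, e1 2⟫ := by
    rw [hpyA, ← hA0e1, A₀.inner_map_map]
  have h3 : ⟪p - y, n y⟫ = t * ⟪z - y, n y⟫ := by
    rw [hpy, real_inner_smul_left]
  nlinarith [h1, h2.symm.trans h3]

set_option maxHeartbeats 1000000 in
lemma ball_subset_of_chart {D : Set (EuclideanSpace ℝ (Fin 2))} {ε₀ η : ℝ}
    {n : EuclideanSpace ℝ (Fin 2) → EuclideanSpace ℝ (Fin 2)}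
    (hD : AssumptionD 2 D ε₀ η n) :
    ∀ y ∈ frontier D,
      ball (y + (min (η/4) (ε₀/4)) • n y) (min (η/4) (ε₀/4)) ⊆ D := by
  set r : ℝ := min (η/4) (ε₀/4) with hrdef
  have hr0 : 0 < r := lt_min (by linarith [hD.eta_pos]) (by linarith [hD.eps_pos])
  have hrη : r ≤ η/4 := min_le_left _ _
  have hrε : r ≤ ε₀/4 := min_le_right _ _
  intro y hy z hzball
  obtain ⟨A₀, hA0e1, ψ, hψ, hψnn, hψ0, hψd, _, hψb, hset⟩ := hD.chart y hy
  set Aeq := A₀.toLinearIsometryEquiv rfl with hAeq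
  set u : EuclideanSpace ℝ (Fin 2) := Aeq.symm (z - y) with hu
  have hAu : A₀ u = z - y := by
    have h1 : Aeq u = z - y := Aeq.apply_symm_apply _
    rwa [hAeq, A₀.toLinearIsometryEquiv_apply rfl] at h1
  have hdiff : ‖u - r • e1 2‖ < r := by
    have h1 : A₀ (u - r • e1 2) = z - (y + r • n y) := by
      rw [map_sub, map_smul, hAu, hA0e1]
      abel
    rw [← A₀.norm_map (u - r • e1 2), h1, ← dist_eq_norm]
    exact hzball
  have hc0 : (u - r • e1 2) 0 = u 0 - r := by
    simp [PiLp.sub_apply, PiLp.smul_apply, e1_apply_0, smul_eq_mul]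
  have hc1 : (u - r • e1 2) 1 = u 1 := by
    simp [PiLp.sub_apply, PiLp.smul_apply, e1_apply_1, smul_eq_mul]
  have a2 : (u 0 - r)^2 + (u 1)^2 < r^2 := by
    have h2 : ‖u - r • e1 2‖^2 < r^2 := by
      nlinarith [norm_nonneg (u - r • e1 2), hdiff]
    rw [euc_norm_sq, hc0, hc1] at h2
    exact h2
  have u0pos : 0 < u 0 := by nlinarith [sq_nonneg (u 1)]
  have u0lt : u 0 ^2 + u 1 ^2 < 2 * r * u 0 := by nlinarith
  have hu0le : u 0 ≤ ‖u‖ := by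
    nlinarith [euc_norm_sq u, sq_nonneg (u 1), norm_nonneg u]
  have hnu : ‖u‖ < ε₀ := by
    have h3 : ‖u‖^2 < 2 * r * ‖u‖ := by
      rw [euc_norm_sq]
      nlinarith
    have h4 : 0 < ‖u‖ := lt_of_lt_of_le u0pos hu0le
    nlinarith [hD.eps_pos]
  have hproj : projTail 2 u ∈ ball (0 : EuclideanSpace ℝ (Fin (2-1))) ε₀ :=
    mem_ball_zero_iff.2 (lt_of_le_of_lt (norm_projTail_le u) hnu)
  have hψv : ψ (projTail 2 u) ≤ η⁻¹ * (u 1)^2 := by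
    have h := psi_quad hD.eta_pos hψ hψ0 hψd hψb (projTail 2 u) hproj
    rwa [euc1_norm_sq (projTail 2 u), projTail_apply] at h
  have hinv : 0 < η⁻¹ := inv_pos.2 hD.eta_pos
  have h5 : u 1 ^2 ≤ 2*r*u 0 := by nlinarith [sq_nonneg (u 0)]
  have h8 : η⁻¹ * (2*r) ≤ 1/2 := by
    have h8a : η⁻¹ * (2*r) ≤ η⁻¹ * (η/2) := by
      apply mul_le_mul_of_nonneg_left (by linarith) hinv.le
    have h8b : η⁻¹ * (η/2) = 1/2 := by
      field_simp
      exact div_self (ne_of_gt (by nlinarith [hD.eta_pos]))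
    linarith
  have hkey : ψ (projTail 2 u) < ⟪u, e1 2⟫ := by
    rw [inner_e1]
    have h6 : η⁻¹ * (u 1)^2 ≤ (η⁻¹ * (2*r)) * u 0 := by
      rw [mul_assoc]
      exact mul_le_mul_of_nonneg_left (by nlinarith) hinv.le
    nlinarith
  have hzmem : z ∈ D ∩ ball y ε₀ := by
    rw [hset]
    refine ⟨u, ⟨mem_ball_zero_iff.2 hnu, hkey⟩, ?_⟩
    show y + A₀ u = z
    rw [hAu]; abel
  exact hzmem.1

lemma n_lip {D : Set (EuclideanSpace ℝ (Fin 2))} {ε₀ η : ℝ}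
    {n : EuclideanSpace ℝ (Fin 2) → EuclideanSpace ℝ (Fin 2)}
    (hD : AssumptionD 2 D ε₀ η n) :
    ∀ y ∈ frontier D, ∀ y' ∈ frontier D,
      ‖n y - n y'‖ ≤ (min (η/4) (ε₀/4))⁻¹ * ‖y - y'‖ := by
  set r : ℝ := min (η/4) (ε₀/4) with hrdef
  have hr0 : 0 < r := lt_min (by linarith [hD.eta_pos]) (by linarith [hD.eps_pos])
  have key : ∀ y ∈ frontier D, ∀ y' ∈ frontier D,
      r * (1 - ⟪n y', n y⟫) ≤ ⟪y' - y, n y⟫ := by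
    intro y hy y' hy'
    have hball := ball_subset_of_chart hD y' hy'
    set T : ℝ := ⟪y' - y, n y⟫ + r * ⟪n y', n y⟫ with hT
    have hs : ∀ s : ℝ, 0 < s → s < r → s < T := by
      intro s hs0 hsr
      have hz : (y' + r • n y' - s • n y) ∈ ball (y' + r • n y') r := by
        rw [mem_ball, dist_eq_norm]
        have h0 : y' + r • n y' - s • n y - (y' + r • n y') = -(s • n y) := by abel
        rw [h0, norm_neg, norm_smul, Real.norm_eq_abs, abs_of_pos hs0,
          hD.normal_norm y hy, mul_one]
        exact hsr
      have hpos := inner_pos hD y hy _ (hball hz)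
      have hexp : ⟪y' + r • n y' - s • n y - y, n y⟫ = T - s := by
        have h1 : y' + r • n y' - s • n y - y = (y' - y) + r • n y' + (-s) • n y := by
          module
        rw [h1, inner_add_left, inner_add_left, real_inner_smul_left, real_inner_smul_left,
          real_inner_self_eq_norm_sq, hD.normal_norm y hy, hT]
        ring
      rw [hexp] at hpos
      linarith
    have hrT : r ≤ T := by
      by_contra hlt
      push_neg at hlt
      rcases le_or_gt T (r/2) with h | h
      · have := hs (r/2) (by linarith) (by linarith)
        linarith
      · have := hs T (by linarith) hlt
        linarith
    nlinarith [hrT]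
  intro y hy y' hy'
  have h1 := key y hy y' hy'
  have h2 := key y' hy' y hy
  have hns : ‖n y - n y'‖^2 = 2 - 2*⟪n y, n y'⟫ := by
    rw [@norm_sub_sq_real, hD.normal_norm y hy, hD.normal_norm y' hy']
    ring
  have hcomm : ⟪n y', n y⟫ = ⟪n y, n y'⟫ := real_inner_comm _ _
  have hsum : ⟪y' - y, n y⟫ + ⟪y - y', n y'⟫ = ⟪y' - y, n y - n y'⟫ := by
    rw [inner_sub_right, show y - y' = -(y' - y) from by abel, inner_neg_left]
    ring
  have hcs : ⟪y' - y, n y - n y'⟫ ≤ ‖y' - y‖ * ‖n y - n y'‖ := real_inner_le_norm _ _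
  have hrX : r * ‖n y - n y'‖^2 ≤ ‖y' - y‖ * ‖n y - n y'‖ := by nlinarith
  have hrev : ‖y' - y‖ = ‖y - y'‖ := norm_sub_rev _ _
  rcases eq_or_lt_of_le (norm_nonneg (n y - n y')) with hX0 | hXpos
  · rw [← hX0]
    positivity
  · have hXr : ‖n y - n y'‖ * r ≤ ‖y - y'‖ := by nlinarith
    have := (le_div_iff₀ hr0).2 hXr
    rw [inv_mul_eq_div]
    linarith

/-- if `D ⊂ ℝ²` satisfies Assumption (D), there exist `L > 0` and a family
`(A_y)_{y ∈ ∂D}` of linear isometries of `ℝ²` with `A_y e₁ = n(y)` for every `y ∈ ∂D`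
and `‖A_y − A_{y'}‖ ≤ L |y − y'|` for all `y, y' ∈ ∂D`. -/
theorem stmt_10 (D : Set (EuclideanSpace ℝ (Fin 2))) (ε₀ η : ℝ)
    (n : EuclideanSpace ℝ (Fin 2) → EuclideanSpace ℝ (Fin 2))
    (hD : AssumptionD 2 D ε₀ η n) :
    ∃ L : ℝ, 0 < L ∧
      ∃ A : EuclideanSpace ℝ (Fin 2) →
          (EuclideanSpace ℝ (Fin 2) →ₗᵢ[ℝ] EuclideanSpace ℝ (Fin 2)),
        (∀ y ∈ frontier D, A y (e1 2) = n y) ∧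
        ∀ y ∈ frontier D, ∀ y' ∈ frontier D,
          ‖(A y).toContinuousLinearMap - (A y').toContinuousLinearMap‖ ≤ L * ‖y - y'‖ := by
  classical
  set r : ℝ := min (η/4) (ε₀/4) with hrdef
  have hr0 : 0 < r := lt_min (by linarith [hD.eta_pos]) (by linarith [hD.eps_pos])
  refine ⟨r⁻¹, inv_pos.2 hr0, ?_⟩
  set A : EuclideanSpace ℝ (Fin 2) → (EuclideanSpace ℝ (Fin 2) →ₗᵢ[ℝ] EuclideanSpace ℝ (Fin 2)) :=
    fun y => if h : ‖n y‖ = 1 then rotIso (n y) h else LinearIsometry.id with hA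
  have hAy : ∀ y, ∀ hy : y ∈ frontier D, A y = rotIso (n y) (hD.normal_norm y hy) := by
    intro y hy
    rw [hA]
    simp only [dif_pos (hD.normal_norm y hy)]
  refine ⟨A, ?_, ?_⟩
  · intro y hy
    rw [hAy y hy]
    exact rot_e1 (n y) _
  · intro y hy y' hy'
    rw [hAy y hy, hAy y' hy']
    have hlip := n_lip hD y hy y' hy'
    apply ContinuousLinearMap.opNorm_le_bound _ (by positivity)
    intro u
    have heq : ((rotIso (n y) (hD.normal_norm y hy)).toContinuousLinearMap
        - (rotIso (n y') (hD.normal_norm y' hy')).toContinuousLinearMap) u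
        = rotL (n y - n y') u := by
      rw [ContinuousLinearMap.sub_apply]
      exact rotL_sub _ _ _
    rw [heq, rotL_norm]
    show ‖n y - n y'‖ * ‖u‖ ≤ (min (η/4) (ε₀/4))⁻¹ * ‖y - y'‖ * ‖u‖
    exact mul_le_mul_of_nonneg_right hlip (norm_nonneg u)
end
end

section
/- Let (zₙ)_{n≥1} be nondecreasing càdlàg functions from [0,∞) to ℝ with zₙ(0) = 0 and lim_{u→∞} zₙ(u) = ∞, and suppose zₙ → z in the Skorokhod J₁ sense, where z is a strictly increasing càdlàg function with z(0) = 0 and lim_{u→∞} z(u) = ∞. Let y(t) = inf{ u ≥ 0 : z(u) > t } and yₙ(t) = inf{ u ≥ 0 : zₙ(u) > t } be the right-continuous inverses. Then: (i) for every T > 0, sup_{t ∈ [0,T]} |yₙ(t) − y(t)| → 0 as n → ∞; (ii) if tₙ → t > 0 and z(y(t)−) < t < z(y(t)), then Δzₙ(yₙ(tₙ)) → Δz(y(t)) as n → ∞. -/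
open Set Filter Function
open scoped Topology

noncomputable section

/-- The right-continuous generalized inverse `y(t) = inf{u ≥ 0 : z(u) > t}`. -/
def rcInv (z : ℝ → ℝ) (t : ℝ) : ℝ :=
  sInf {u : ℝ | 0 ≤ u ∧ t < z u}


lemma rcSet_nonempty {z : ℝ → ℝ} (htop : Tendsto z atTop atTop) (t : ℝ) :
    {u : ℝ | 0 ≤ u ∧ t < z u}.Nonempty := by
  obtain ⟨u, hu1, hu2⟩ := ((eventually_ge_atTop (0:ℝ)).and
    (htop.eventually (eventually_gt_atTop t))).exists
  exact ⟨u, hu1, hu2⟩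

lemma rcSet_bdd (z : ℝ → ℝ) (t : ℝ) : BddBelow {u : ℝ | 0 ≤ u ∧ t < z u} :=
  ⟨0, fun _ hx => hx.1⟩

lemma rcInv_nonneg {z : ℝ → ℝ} (htop : Tendsto z atTop atTop) (t : ℝ) :
    0 ≤ rcInv z t :=
  le_csInf (rcSet_nonempty htop t) fun _ hu => hu.1

lemma rcInv_le {z : ℝ → ℝ} {t u : ℝ} (h0 : 0 ≤ u) (h : t < z u) : rcInv z t ≤ u :=
  csInf_le (rcSet_bdd z t) ⟨h0, h⟩

lemma lt_apply_of_rcInv_lt {z : ℝ → ℝ} (hm : Monotone z) (htop : Tendsto z atTop atTop)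
    {t u : ℝ} (h : rcInv z t < u) : t < z u := by
  obtain ⟨w, hw, hwu⟩ := (csInf_lt_iff (rcSet_bdd z t) (rcSet_nonempty htop t)).mp h
  exact hw.2.trans_le (hm hwu.le)

lemma apply_le_of_lt_rcInv {z : ℝ → ℝ} {t u : ℝ} (h0 : 0 ≤ u) (h : u < rcInv z t) :
    z u ≤ t := by
  by_contra hc
  push_neg at hc
  exact absurd (rcInv_le h0 hc) (not_le.mpr h)

lemma le_rcInv {z : ℝ → ℝ} (htop : Tendsto z atTop atTop) {t c : ℝ}
    (h : ∀ u, 0 ≤ u → t < z u → c ≤ u) : c ≤ rcInv z t :=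
  le_csInf (rcSet_nonempty htop t) fun u hu => h u hu.1 hu.2

lemma rcInv_mono {z : ℝ → ℝ} (htop : Tendsto z atTop atTop) : Monotone (rcInv z) :=
  fun s t hst => le_csInf (rcSet_nonempty htop t) fun _ hu =>
    csInf_le (rcSet_bdd z s) ⟨hu.1, hst.trans_lt hu.2⟩

lemma rcInv_continuous {z : ℝ → ℝ} (hm : Monotone z) (hs : StrictMonoOn z (Ici 0))
    (htop : Tendsto z atTop atTop) : Continuous (rcInv z) := by
  rw [Metric.continuous_iff]
  intro s ε hε
  set a := rcInv z s with ha
  have ha0 : 0 ≤ a := rcInv_nonneg htop s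
  have hza : s < z (a + ε/2) := lt_apply_of_rcInv_lt hm htop (by linarith)
  have hδl : ∃ δl > (0:ℝ), ∀ t, s - δl < t → a - ε/2 ≤ rcInv z t := by
    by_cases hcase : a < ε/2
    · exact ⟨1, one_pos, fun t _ => le_trans (by linarith) (rcInv_nonneg htop t)⟩
    · push_neg at hcase
      have hu0 : (0:ℝ) ≤ a - ε/2 := by linarith
      have h1 : z (a - ε/2) < z (a - ε/4) :=
        hs (mem_Ici.mpr hu0) (mem_Ici.mpr (by linarith)) (by linarith)
      have h2 : z (a - ε/4) ≤ s := apply_le_of_lt_rcInv (by linarith) (by linarith)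
      refine ⟨s - z (a - ε/2), by linarith, fun t htlt => ?_⟩
      refine le_rcInv htop fun u hu0' hzu => ?_
      by_contra hcon
      push_neg at hcon
      have hmu : z u ≤ z (a - ε/2) := hm hcon.le
      linarith
  obtain ⟨δl, hδl0, hδl⟩ := hδl
  refine ⟨min (z (a + ε/2) - s) δl, lt_min (by linarith) hδl0, fun t ht => ?_⟩
  rw [Real.dist_eq] at ht ⊢
  rw [abs_lt] at ht
  have hmin1 : min (z (a + ε/2) - s) δl ≤ z (a + ε/2) - s := min_le_left _ _
  have hmin2 : min (z (a + ε/2) - s) δl ≤ δl := min_le_right _ _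
  have h1 : rcInv z t ≤ a + ε/2 := rcInv_le (by linarith) (by linarith)
  have h2 : a - ε/2 ≤ rcInv z t := hδl t (by linarith)
  rw [abs_lt]
  constructor <;> linarith

/-- let `zₙ` be nondecreasing càdlàg functions on `[0,∞)` (encoded as
functions on `ℝ` vanishing on `(−∞,0]`) with `zₙ(0) = 0` and `zₙ(u) → ∞`, converging in
the Skorokhod `J₁` sense (via time changes `λₙ`) to a strictly increasing càdlàg `z` with
`z(0) = 0` and `z(u) → ∞`. Let `y, yₙ` be the right-continuous inverses. Then
(i) `yₙ → y` uniformly on compact subsets of `[0,∞)`, and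
(ii) if `tₙ → t > 0` and `z(y(t)−) < t < z(y(t))`, then
`Δzₙ(yₙ(tₙ)) → Δz(y(t))`, where `Δw(u) = w(u) − w(u−)`. -/
theorem stmt_19
    (zseq : ℕ → ℝ → ℝ) (z : ℝ → ℝ)
    (hmono : ∀ n, Monotone (zseq n))
    (hzero : ∀ n, ∀ u : ℝ, u ≤ 0 → zseq n u = 0)
    (hrc : ∀ n, ∀ u : ℝ, ContinuousWithinAt (zseq n) (Set.Ici u) u)
    (htop : ∀ n, Tendsto (zseq n) atTop atTop)
    (hzmono : Monotone z)
    (hzstrict : StrictMonoOn z (Set.Ici (0 : ℝ)))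
    (hzzero : ∀ u : ℝ, u ≤ 0 → z u = 0)
    (hzrc : ∀ u : ℝ, ContinuousWithinAt z (Set.Ici u) u)
    (hztop : Tendsto z atTop atTop)
    (lam : ℕ → ℝ → ℝ)
    (hlamc : ∀ n, ContinuousOn (lam n) (Set.Ici (0 : ℝ)))
    (hlam0 : ∀ n, lam n 0 = 0)
    (hlammono : ∀ n, StrictMonoOn (lam n) (Set.Ici (0 : ℝ)))
    (hlamsurj : ∀ n, lam n '' Set.Ici (0 : ℝ) = Set.Ici (0 : ℝ))
    (hlamunif : ∀ ε : ℝ, 0 < ε → ∃ N : ℕ, ∀ n ≥ N, ∀ t : ℝ, 0 ≤ t → |lam n t - t| ≤ ε)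
    (hconv : ∀ T : ℝ, 0 < T → ∀ ε : ℝ, 0 < ε → ∃ N : ℕ, ∀ n ≥ N,
      ∀ t ∈ Set.Icc (0 : ℝ) T, |zseq n (lam n t) - z t| ≤ ε) :
    (∀ T : ℝ, 0 < T → ∀ ε : ℝ, 0 < ε → ∃ N : ℕ, ∀ n ≥ N,
      ∀ t ∈ Set.Icc (0 : ℝ) T, |rcInv (zseq n) t - rcInv z t| ≤ ε) ∧
    (∀ (tseq : ℕ → ℝ) (t : ℝ), 0 < t → Tendsto tseq atTop (𝓝 t) →
      Function.leftLim z (rcInv z t) < t → t < z (rcInv z t) →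
      Tendsto (fun n => zseq n (rcInv (zseq n) (tseq n)) -
          Function.leftLim (zseq n) (rcInv (zseq n) (tseq n)))
        atTop (𝓝 (z (rcInv z t) - Function.leftLim z (rcInv z t)))) := by
  -- Pointwise convergence of the inverses
  have ptwise : ∀ s : ℝ, 0 ≤ s → ∀ ε : ℝ, 0 < ε →
      ∃ N : ℕ, ∀ n ≥ N, |rcInv (zseq n) s - rcInv z s| ≤ ε := by
    intro s hs ε hε
    set a := rcInv z s with ha
    have ha0 : 0 ≤ a := rcInv_nonneg hztop s
    have hT' : (0:ℝ) < a + ε + 1 := by linarith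
    have hgap1 : s < z (a + ε/2) := lt_apply_of_rcInv_lt hzmono hztop (by linarith)
    obtain ⟨N₁, hN₁⟩ := hconv (a+ε+1) hT' ((z (a + ε/2) - s)/2) (by linarith)
    obtain ⟨N₂, hN₂⟩ := hlamunif (ε/2) (by linarith)
    -- upper bound
    have hupper : ∀ n, N₁ ≤ n → N₂ ≤ n → rcInv (zseq n) s ≤ a + ε := by
      intro n hn1 hn2
      have h1 := hN₁ n hn1 (a + ε/2) ⟨by linarith, by linarith⟩
      have h2 := hN₂ n hn2 (a + ε/2) (by linarith)
      rw [abs_le] at h1 h2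
      have hlam0' : 0 ≤ lam n (a + ε/2) := by
        have := (hlammono n).monotoneOn self_mem_Ici (mem_Ici.mpr (by linarith : (0:ℝ) ≤ a + ε/2))
          (by linarith)
        rw [hlam0 n] at this
        exact this
      have hlt : s < zseq n (lam n (a + ε/2)) := by linarith
      have := rcInv_le hlam0' hlt
      linarith
    -- lower bound
    have hlower : ∃ N₃ : ℕ, ∀ n, N₃ ≤ n → N₂ ≤ n → a - ε ≤ rcInv (zseq n) s := by
      by_cases hcase : a < ε
      · exact ⟨0, fun n _ _ => le_trans (by linarith) (rcInv_nonneg (htop n) s)⟩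
      · push_neg at hcase
        have hu0 : (0:ℝ) ≤ a - ε/2 := by linarith
        have hzlt : z (a - ε/2) < z (a - ε/4) :=
          hzstrict (mem_Ici.mpr hu0) (mem_Ici.mpr (by linarith)) (by linarith)
        have hzle : z (a - ε/4) ≤ s := apply_le_of_lt_rcInv (by linarith) (by linarith)
        obtain ⟨N₃, hN₃⟩ := hconv (a+ε+1) hT' ((s - z (a - ε/2))/2) (by linarith)
        refine ⟨N₃, fun n hn3 hn2 => ?_⟩
        refine le_rcInv (htop n) fun w hw0 hzw => ?_
        by_contra hcon
        push_neg at hcon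
        have hw' : w ∈ lam n '' Ici (0:ℝ) := by rw [hlamsurj n]; exact hw0
        obtain ⟨v, hv0, hvw⟩ := hw'
        have hvb := hN₂ n hn2 v hv0
        rw [abs_le, hvw] at hvb
        have hvlt : v ≤ a - ε/2 := by linarith
        have h1 := hN₃ n hn3 v ⟨hv0, by linarith⟩
        rw [abs_le, hvw] at h1
        have hzv : z v ≤ z (a - ε/2) := hzmono hvlt
        linarith
    obtain ⟨N₃, hN₃'⟩ := hlower
    refine ⟨max (max N₁ N₂) N₃, fun n hn => ?_⟩
    have hn1 : N₁ ≤ n := le_trans (le_trans (le_max_left _ _) (le_max_left _ _)) hn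
    have hn2 : N₂ ≤ n := le_trans (le_trans (le_max_right _ _) (le_max_left _ _)) hn
    have hn3 : N₃ ≤ n := le_trans (le_max_right _ _) hn
    rw [abs_le]
    exact ⟨by linarith [hN₃' n hn3 hn2], by linarith [hupper n hn1 hn2]⟩
  constructor
  · -- Part (i)
    intro T hT ε hε
    have hcont : Continuous (rcInv z) := rcInv_continuous hzmono hzstrict hztop
    have huc : UniformContinuousOn (rcInv z) (Icc (0:ℝ) (T+1)) :=
      isCompact_Icc.uniformContinuousOn_of_continuous hcont.continuousOn
    rw [Metric.uniformContinuousOn_iff] at huc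
    obtain ⟨δ, hδ0, hδ⟩ := huc (ε/2) (by linarith)
    obtain ⟨m, hm⟩ := exists_nat_gt ((T+1)/δ)
    have hm0 : 0 < (m:ℝ) := lt_of_le_of_lt (div_nonneg (by linarith) hδ0.le) hm
    set h := (T+1)/m with hhdef
    have hh0 : 0 < h := div_pos (by linarith) hm0
    have hmh : (m:ℝ) * h = T + 1 := by rw [hhdef]; field_simp
    have hhδ : h < δ := by
      rw [hhdef, div_lt_iff₀ hm0]
      calc T + 1 = ((T+1)/δ) * δ := by field_simp
      _ < m * δ := by exact mul_lt_mul_of_pos_right hm hδ0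
      _ = δ * m := mul_comm _ _
    choose Nf hNf using fun i : ℕ => ptwise (i*h) (by positivity) (ε/2) (by linarith)
    refine ⟨(Finset.range (m+1)).sup Nf, fun n hn t ht => ?_⟩
    obtain ⟨ht0, htT⟩ := ht
    set i := ⌊t/h⌋₊ with hidef
    have hih : (i:ℝ) * h ≤ t := by
      have h1 : (i:ℝ) ≤ t/h := Nat.floor_le (div_nonneg ht0 hh0.le)
      calc (i:ℝ) * h ≤ (t/h) * h := mul_le_mul_of_nonneg_right h1 hh0.le
      _ = t := by field_simp
    have hih2 : t ≤ ((i:ℝ)+1) * h := by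
      have h1 : t/h < (i:ℝ)+1 := Nat.lt_floor_add_one (t/h)
      have := mul_le_mul_of_nonneg_right h1.le hh0.le
      calc t = (t/h) * h := by field_simp
      _ ≤ ((i:ℝ)+1) * h := this
    have him : i + 1 ≤ m := by
      by_contra hcon
      push_neg at hcon
      have hmi : (m:ℝ) ≤ (i:ℝ) := by exact_mod_cast Nat.lt_succ_iff.mp hcon
      have : (m:ℝ) * h ≤ (i:ℝ) * h := mul_le_mul_of_nonneg_right hmi hh0.le
      linarith
    have himr : (i:ℝ) + 1 ≤ (m:ℝ) := by exact_mod_cast him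
    have hgN : ∀ j : ℕ, j ≤ m → Nf j ≤ n :=
      fun j hj => le_trans (Finset.le_sup (Finset.mem_range.mpr (by omega))) hn
    have hg1 := hNf i n (hgN i (by omega))
    have hg2 := hNf (i+1) n (hgN (i+1) him)
    push_cast at hg2
    have hgc : |rcInv z (((i:ℝ)+1)*h) - rcInv z ((i:ℝ)*h)| ≤ ε/2 := by
      have hd : dist (((i:ℝ)+1)*h) ((i:ℝ)*h) < δ := by
        rw [Real.dist_eq]
        have : ((i:ℝ)+1)*h - (i:ℝ)*h = h := by ring
        rw [this, abs_of_pos hh0]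
        exact hhδ
      have hmem1 : ((i:ℝ)+1)*h ∈ Icc (0:ℝ) (T+1) := by
        constructor
        · positivity
        · calc ((i:ℝ)+1)*h ≤ (m:ℝ)*h := mul_le_mul_of_nonneg_right himr hh0.le
          _ = T + 1 := hmh
      have hmem2 : (i:ℝ)*h ∈ Icc (0:ℝ) (T+1) := by
        constructor
        · positivity
        · nlinarith
      have := hδ _ hmem1 _ hmem2 hd
      rw [Real.dist_eq] at this
      exact this.le
    have hM1 : rcInv (zseq n) ((i:ℝ)*h) ≤ rcInv (zseq n) t := rcInv_mono (htop n) hih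
    have hM2 : rcInv (zseq n) t ≤ rcInv (zseq n) (((i:ℝ)+1)*h) := rcInv_mono (htop n) hih2
    have hM3 : rcInv z ((i:ℝ)*h) ≤ rcInv z t := rcInv_mono hztop hih
    have hM4 : rcInv z t ≤ rcInv z (((i:ℝ)+1)*h) := rcInv_mono hztop hih2
    rw [abs_le] at hg1 hg2 hgc ⊢
    constructor <;> linarith
  · -- Part (ii)
    intro tseq t ht htt hl hr
    set a := rcInv z t with hadef
    have ha0 : 0 ≤ a := rcInv_nonneg hztop t
    have hz0 : z 0 = 0 := hzzero 0 le_rfl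
    have hapos : 0 < a := by
      rcases ha0.lt_or_eq with h | h
      · exact h
      · rw [← h, hz0] at hr; linarith
    rw [Metric.tendsto_atTop]
    intro ε hε
    set p := t - leftLim z a with hpdef
    set q := z a - t with hqdef
    have hp0 : 0 < p := by rw [hpdef]; linarith
    have hq0 : 0 < q := by rw [hqdef]; linarith
    set η := min (min (p/4) (q/4)) (ε/8) with hηdef
    have hη0 : 0 < η := lt_min (lt_min (by linarith) (by linarith)) (by linarith)
    have hηp : η ≤ p/4 := le_trans (min_le_left _ _) (min_le_left _ _)
    have hηq : η ≤ q/4 := le_trans (min_le_left _ _) (min_le_right _ _)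
    have hηε : η ≤ ε/8 := min_le_right _ _
    -- choose w < a close to a with z w close to leftLim z a
    have hwex : ∃ w, 0 ≤ w ∧ w < a ∧ leftLim z a - ε/8 < z w := by
      have h1 := hzmono.tendsto_leftLim a
      have h2 : ∀ᶠ u in 𝓝[<] a, leftLim z a - ε/8 < z u :=
        h1.eventually (eventually_gt_nhds (by linarith))
      have h3 : Ioo (a/2) a ∈ 𝓝[<] a :=
        Ioo_mem_nhdsLT_of_mem ⟨by linarith, le_rfl⟩
      obtain ⟨w, hw1, hw2⟩ := (h2.and h3).exists
      exact ⟨w, by linarith [hw2.1], hw2.2, hw1⟩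
    obtain ⟨w, hw0, hwa, hwz⟩ := hwex
    obtain ⟨N₁, hN₁⟩ := hconv (a+1) (by linarith) η hη0
    obtain ⟨N₂, hN₂⟩ := Metric.tendsto_atTop.mp htt (min p q / 4)
      (by positivity)
    refine ⟨max N₁ N₂, fun n hn => ?_⟩
    have hn1 : N₁ ≤ n := le_of_max_le_left hn
    have hn2 : N₂ ≤ n := le_of_max_le_right hn
    have htnb := hN₂ n hn2
    rw [Real.dist_eq, abs_lt] at htnb
    have hminp : min p q ≤ p := min_le_left _ _
    have hminq : min p q ≤ q := min_le_right _ _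
    have hlampos : 0 < lam n a := by
      have := hlammono n self_mem_Ici (mem_Ici.mpr ha0) hapos
      rwa [hlam0 n] at this
    have hconva := hN₁ n hn1 a ⟨ha0, by linarith⟩
    rw [abs_le] at hconva
    have hconvw := hN₁ n hn1 w ⟨hw0, by linarith⟩
    rw [abs_le] at hconvw
    have htn1 : leftLim z a + η < tseq n := by
      have : t - p/4 ≤ tseq n := by linarith
      have hple : leftLim z a = t - p := by rw [hpdef]; ring
      linarith
    have htn2 : tseq n < z a - η := by
      have : tseq n ≤ t + q/4 := by linarith
      have hqle : z a = t + q := by rw [hqdef]; ring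
      linarith
    -- all points strictly left of lam n a have small zseq n values
    have hbound : ∀ u, 0 ≤ u → u < lam n a → zseq n u ≤ leftLim z a + η := by
      intro u hu0 hua
      have hmem : u ∈ lam n '' Ici (0:ℝ) := by rw [hlamsurj n]; exact hu0
      obtain ⟨v, hv0, hvu⟩ := hmem
      have hva : v < a := by
        by_contra hc
        push_neg at hc
        have := (hlammono n).monotoneOn (mem_Ici.mpr ha0) (mem_Ici.mpr hv0) hc
        rw [hvu] at this
        linarith
      have hvb := hN₁ n hn1 v ⟨hv0, by linarith⟩
      rw [abs_le, hvu] at hvb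
      have : z v ≤ leftLim z a := hzmono.le_leftLim hva
      linarith
    have hble : rcInv (zseq n) (tseq n) ≤ lam n a := by
      apply rcInv_le hlampos.le
      linarith [hconva.1]
    have hbge : lam n a ≤ rcInv (zseq n) (tseq n) := by
      apply le_rcInv (htop n)
      intro u hu0 hzu
      by_contra hc
      push_neg at hc
      have := hbound u hu0 hc
      linarith
    have hbeq : rcInv (zseq n) (tseq n) = lam n a := le_antisymm hble hbge
    rw [hbeq]
    have hllub : leftLim (zseq n) (lam n a) ≤ leftLim z a + η := by
      apply le_of_tendsto ((hmono n).tendsto_leftLim (lam n a))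
      filter_upwards [Ioo_mem_nhdsLT_of_mem (⟨hlampos, le_rfl⟩ : lam n a ∈ Ioc 0 (lam n a))]
        with u hu
      exact hbound u hu.1.le hu.2
    have hlllb : z w - η ≤ leftLim (zseq n) (lam n a) := by
      have hlw : lam n w < lam n a := hlammono n (mem_Ici.mpr hw0) (mem_Ici.mpr ha0) hwa
      have := (hmono n).le_leftLim hlw
      linarith [hconvw.1]
    rw [Real.dist_eq, abs_lt]
    constructor <;> linarith [hconva.1, hconva.2]
end
end
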